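/- arXiv:1406.3764 — 3 statements merged into one kernel-verified Lean document; each statement's English description precedes it below -/
import Mathlib

section
/- Let X_t be a simple random walk on a nondecreasing sequence of connected growing graphs G_t ⊆ Ḡ, with X_0 = 0 and B^Ḡ(0,1) ⊆ G_0. Then on the event {X_t = 0 only finitely often} (transience of 0), almost surely the graph distance d^{G_t}(0, X_t) tends to infinity as t → ∞. -/
open MeasureTheory ProbabilityTheory Filter Set
open scoped ENNReal Classical Pointwise

namespace MonotoneWalk

variable {V : Type*}

/-- The weight of a finite walk in a graph: the product, over the vertices from which
the successive steps are taken, of the inverse degree. This is the probability that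
simple random walk follows precisely this walk. -/
noncomputable def walkWeight (G : SimpleGraph V) {u v : V} (w : G.Walk u v) : ℝ≥0∞ :=
  (w.support.dropLast.map fun x => (((G.neighborSet x).ncard : ℝ≥0∞))⁻¹).prod

/-- Probability that simple random walk on `G` started at `y` visits `o` before entering
the set `B` (counting only strict predecessors of the hitting time of `o`). -/
noncomputable def hitProbBefore (G : SimpleGraph V) (y o : V) (B : Set V) : ℝ≥0∞ :=
  ∑' w : {w : G.Walk y o // ∀ x ∈ w.support.dropLast, x ≠ o ∧ x ∉ B},
    walkWeight G w.1

/-- Probability that simple random walk on `G` started at `y` ever visits `o`. -/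
noncomputable def hitProb (G : SimpleGraph V) (y o : V) : ℝ≥0∞ :=
  hitProbBefore G y o ∅

/-- Probability that simple random walk on `G` started at `o` returns to `o`
(first-return decomposition). -/
noncomputable def returnProb (G : SimpleGraph V) (o : V) : ℝ≥0∞ :=
  ∑' w : {w : G.Walk o o // w.length ≠ 0 ∧ ∀ x ∈ w.support.tail.dropLast, x ≠ o},
    walkWeight G w.1

/-- Simple random walk on the fixed graph `G` is transient (at the vertex `o`). -/
def SRWTransient (G : SimpleGraph V) (o : V) : Prop := returnProb G o < 1

/-- The boundary `∂H` of a subgraph `H ⊆ Ḡ` : vertices of `H` whose degree in `H`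
is smaller than their degree in `Ḡ`. -/
def Boundary (Gbar : SimpleGraph V) (H : Gbar.Subgraph) : Set V :=
  {z | z ∈ H.verts ∧ (H.neighborSet z).ncard < (Gbar.neighborSet z).ncard}

/-- The subgraph of `Ḡ` induced by a set `s` of sites (all edges of `Ḡ` between
sites of `s` are present). -/
def siteSubgraph (Gbar : SimpleGraph V) (s : Set V) : Gbar.Subgraph where
  verts := s
  Adj x y := Gbar.Adj x y ∧ x ∈ s ∧ y ∈ s
  adj_sub h := h.1
  edge_vert h := h.2.1
  symm := ⟨fun x y h => ⟨h.1.symm, h.2.2, h.2.1⟩⟩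

/-- The subgraph of `Ḡ` consisting of all edges of the closed ball of radius 1 around `z`. -/
def ballSubgraph (Gbar : SimpleGraph V) (z : V) : Gbar.Subgraph :=
  siteSubgraph Gbar {x | Gbar.dist z x ≤ 1}

/-- The nearest-neighbor lattice graph on `ℤ^d`. -/
def latticeGraph (d : ℕ) : SimpleGraph (Fin d → ℤ) where
  Adj x y := (∑ i, |x i - y i|) = 1
  symm := by
    constructor
    intro x y h
    simpa only [abs_sub_comm] using h
  loopless := by
    constructor
    intro x h
    simp at h

/-- The `i`-th unit vector of `ℤ^d`. -/
def eVec (d : ℕ) (i : Fin d) : Fin d → ℤ := fun j => if j = i then 1 else 0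

lemma lattice_adj_add (d : ℕ) (z : Fin d → ℤ) (i : Fin d) :
    (latticeGraph d).Adj z (z + eVec d i) := by
  show (∑ j, |z j - (z j + eVec d i j)|) = 1
  have : ∀ j, |z j - (z j + eVec d i j)| = if j = i then 1 else 0 := by
    intro j
    by_cases h : j = i <;> simp [eVec, h]
  rw [Finset.sum_congr rfl fun j _ => this j]
  simp

lemma lattice_adj_sub (d : ℕ) (z : Fin d → ℤ) (i : Fin d) :
    (latticeGraph d).Adj z (z - eVec d i) := by
  show (∑ j, |z j - (z j - eVec d i j)|) = 1
  have : ∀ j, |z j - (z j - eVec d i j)| = if j = i then 1 else 0 := by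
    intro j
    by_cases h : j = i <;> simp [eVec, h]
  rw [Finset.sum_congr rfl fun j _ => this j]
  simp

/-- The subgraph of `ℤ²` consisting of the three right/up/down edges at `z`. -/
noncomputable def rud (z : Fin 2 → ℤ) : (latticeGraph 2).Subgraph :=
  SimpleGraph.subgraphOfAdj _ (lattice_adj_add 2 z 0) ⊔
    SimpleGraph.subgraphOfAdj _ (lattice_adj_add 2 z 1) ⊔
    SimpleGraph.subgraphOfAdj _ (lattice_adj_sub 2 z 1)


/-- Simple random walk on a nondecreasing sequence of connected growing subgraphs
`G_t ⊆ Ḡ`, starting at `X_0 = o` with `B^Ḡ(o,1) ⊆ G_0`; given the past, `X_{t+1}` is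
uniformly distributed among the neighbors of `X_t` in `G_t`. -/
structure GrowingSRW (Gbar : SimpleGraph V) (o : V) {Ω : Type*}
    (mΩ : MeasurableSpace Ω) (μ : Measure Ω) where
  /-- the filtration -/
  F : Filtration ℕ mΩ
  /-- the walk -/
  X : ℕ → Ω → V
  /-- the growing graphs -/
  G : ℕ → Ω → Gbar.Subgraph
  X_adapted : ∀ t (v : V), MeasurableSet[F t] {ω | X t ω = v}
  G_adj_adapted : ∀ t (x y : V), MeasurableSet[F t] {ω | (G t ω).Adj x y}
  G_verts_adapted : ∀ t (x : V), MeasurableSet[F t] {ω | x ∈ (G t ω).verts}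
  mono : ∀ ω t, G t ω ≤ G (t + 1) ω
  conn : ∀ ω t, (G t ω).Connected
  X_mem : ∀ ω t, X t ω ∈ (G t ω).verts
  X_zero : ∀ ω, X 0 ω = o
  ball_sub : ∀ ω (x : V), Gbar.Adj o x → (G 0 ω).Adj o x
  step : ∀ t (v : V),
    μ[(fun ω => if X (t + 1) ω = v then (1 : ℝ) else 0) | F t]
      =ᵐ[μ] fun ω =>
        if (G t ω).Adj (X t ω) v
          then (((G t ω).neighborSet (X t ω)).ncard : ℝ)⁻¹ else 0

namespace GrowingSRW

variable {Gbar : SimpleGraph V} {o : V} {Ω : Type*} {mΩ : MeasurableSpace Ω}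
  {μ : Measure Ω}

/-- `σ_n` given `η_n` : the first time `t ≥ η_n` at which `X_t ∈ ∂G_{η_n}`
(`⊤` if there is no such time, or if `η_n = ⊤`). -/
noncomputable def sigmaOf (W : GrowingSRW Gbar o mΩ μ) (ω : Ω) (η : ℕ∞) : ℕ∞ :=
  sInf ((fun s : ℕ => (s : ℕ∞)) ''
    {s : ℕ | η ≤ (s : ℕ∞) ∧ W.X s ω ∈ Boundary Gbar (W.G η.toNat ω)})

/-- `η_{n+1}` given `σ_n` : the first time `t ≥ σ_n` at which `X_t ∉ ∂G_t`. -/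
noncomputable def nextEta (W : GrowingSRW Gbar o mΩ μ) (ω : Ω) (σ : ℕ∞) : ℕ∞ :=
  sInf ((fun s : ℕ => (s : ℕ∞)) ''
    {s : ℕ | σ ≤ (s : ℕ∞) ∧ W.X s ω ∉ Boundary Gbar (W.G s ω)})

/-- The pair `(η_n, σ_n)` of stopping times, defined recursively, with `η_0 = 0`. -/
noncomputable def times (W : GrowingSRW Gbar o mΩ μ) (ω : Ω) : ℕ → ℕ∞ × ℕ∞
  | 0 => (0, W.sigmaOf ω 0)
  | n + 1 =>
      let η := W.nextEta ω (W.times ω n).2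
      (η, W.sigmaOf ω η)

/-- `η_n`. -/
noncomputable def eta (W : GrowingSRW Gbar o mΩ μ) (n : ℕ) (ω : Ω) : ℕ∞ :=
  (W.times ω n).1

/-- `σ_n`. -/
noncomputable def sigma (W : GrowingSRW Gbar o mΩ μ) (n : ℕ) (ω : Ω) : ℕ∞ :=
  (W.times ω n).2

/-- The event `A_n = {∃ s ∈ [η_n, σ_n) : X_s = o}`. -/
def eventA (W : GrowingSRW Gbar o mΩ μ) (n : ℕ) : Set Ω :=
  {ω | ∃ s : ℕ, W.eta n ω ≤ (s : ℕ∞) ∧ (s : ℕ∞) < W.sigma n ω ∧ W.X s ω = o}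

end GrowingSRW

/-- The σ-algebra `F_τ` of the past up to a (possibly infinite) stopping time `τ`. -/
def stoppedSigma {Ω : Type*} {mΩ : MeasurableSpace Ω} (F : Filtration ℕ mΩ)
    (τ : Ω → ℕ∞) : MeasurableSpace Ω :=
  MeasurableSpace.generateFrom
    {s | MeasurableSet[mΩ] s ∧ ∀ n : ℕ, MeasurableSet[F n] (s ∩ {ω | τ ω ≤ (n : ℕ∞)})}

/-- `p_n = P(A_n | F_{η_n})`. -/
noncomputable def GrowingSRW.p {Gbar : SimpleGraph V} {o : V} {Ω : Type*}
    {mΩ : MeasurableSpace Ω} {μ : Measure Ω} (W : GrowingSRW Gbar o mΩ μ) (n : ℕ) :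
    Ω → ℝ :=
  μ[(W.eventA n).indicator (fun _ => (1 : ℝ)) | stoppedSigma W.F (W.eta n)]


/-- An *extended simple random walk* interacting with growing subgraphs
`G_t ⊆ Ḡ`: it follows the steps of simple random walk on `Ḡ` except that whenever
`Y_t ∈ ∂G_t`, any `F_t`-measurable mechanism may choose
`Y_{t+1} ∈ G_t ∩ C(Y_t)` where `C(x) = B^Ḡ(x, r(x))`, for a fixed function `r`
with `1 ≤ r(x) ≤ c · d^Ḡ(x, o)` and a fixed constant `c < 1`. -/
structure ExtSRW (Gbar : SimpleGraph V) (o : V) {Ω : Type*}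
    (mΩ : MeasurableSpace Ω) (μ : Measure Ω) where
  F : Filtration ℕ mΩ
  /-- the walk -/
  Y : ℕ → Ω → V
  /-- the growing graphs -/
  G : ℕ → Ω → Gbar.Subgraph
  /-- radius of the ball `C(x)` -/
  r : V → ℕ
  /-- the constant `c < 1` -/
  c : ℝ
  hc : c < 1
  hr_one : ∀ x, 1 ≤ r x
  hr_le : ∀ x, x ≠ o → (r x : ℝ) ≤ c * (Gbar.dist x o)
  Y_adapted : ∀ t (v : V), MeasurableSet[F t] {ω | Y t ω = v}
  G_adj_adapted : ∀ t (x y : V), MeasurableSet[F t] {ω | (G t ω).Adj x y}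
  G_verts_adapted : ∀ t (x : V), MeasurableSet[F t] {ω | x ∈ (G t ω).verts}
  mono : ∀ ω t, G t ω ≤ G (t + 1) ω
  conn : ∀ ω t, (G t ω).Connected
  Y_mem : ∀ ω t, Y t ω ∈ (G t ω).verts
  Y_zero : ∀ ω, Y 0 ω = o
  ball_sub : ∀ ω (x : V), Gbar.Adj o x → (G 0 ω).Adj o x
  /-- off the boundary, the walk takes simple random walk steps on `Ḡ` -/
  step_free : ∀ t (v : V), ∀ᵐ ω ∂μ,
    Y t ω ∉ Boundary Gbar (G t ω) →
      (μ[(fun ω' => if Y (t + 1) ω' = v then (1 : ℝ) else 0) | F t]) ω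
        = if Gbar.Adj (Y t ω) v
            then ((Gbar.neighborSet (Y t ω)).ncard : ℝ)⁻¹ else 0
  /-- on the boundary, the next position lies in `G_t ∩ C(Y_t)` -/
  step_bdry : ∀ t ω, Y t ω ∈ Boundary Gbar (G t ω) →
    Y (t + 1) ω ∈ (G t ω).verts ∧ Gbar.dist (Y t ω) (Y (t + 1) ω) ≤ r (Y t ω)

namespace ExtSRW

variable {Gbar : SimpleGraph V} {o : V} {Ω : Type*} {mΩ : MeasurableSpace Ω}
  {μ : Measure Ω}

/-- The *open by touch* (OBT) rule: `G_{t+1} = G_t` except when `Y_t ∈ ∂G_t`, at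
which times all edges of `B^Ḡ(Y_t, 1)` are added to `G_{t+1}`. -/
def IsOBT (W : ExtSRW Gbar o mΩ μ) : Prop :=
  ∀ t ω,
    (W.Y t ω ∈ Boundary Gbar (W.G t ω) →
      W.G (t + 1) ω = W.G t ω ⊔ ballSubgraph Gbar (W.Y t ω)) ∧
    (W.Y t ω ∉ Boundary Gbar (W.G t ω) → W.G (t + 1) ω = W.G t ω)

/-- The *partially open by touch* (POBT) rule: `G_{t+1} = G_t` except possibly when
`Y_t ∈ ∂G_t`, at which times, with (conditional) probability uniformly bounded away
from zero, one or more of the edges of `Ḡ` adjacent to `Y_t` are added to `G_{t+1}`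
(and all added edges are adjacent to `Y_t`). -/
def IsPOBT (W : ExtSRW Gbar o mΩ μ) : Prop :=
  (∀ t ω, W.Y t ω ∉ Boundary Gbar (W.G t ω) → W.G (t + 1) ω = W.G t ω) ∧
  (∀ t ω x y, (W.G (t + 1) ω).Adj x y → ¬ (W.G t ω).Adj x y →
      x = W.Y t ω ∨ y = W.Y t ω) ∧
  ∃ ε : ℝ, 0 < ε ∧ ∀ t, ∀ᵐ ω ∂μ,
    W.Y t ω ∈ Boundary Gbar (W.G t ω) →
      ε ≤ (μ[(fun ω' => if ∃ x, (W.G (t + 1) ω').Adj (W.Y t ω') x ∧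
              ¬ (W.G t ω').Adj (W.Y t ω') x then (1 : ℝ) else 0) | W.F t]) ω

end ExtSRW

/-- The *expanding glassy spheres* (EGS) interaction with balls `B̄_k` (given by the
vertex sets `Bset k`) and prescribed hit counts `N k`: a simple random walk `Z_t`
confined to `B̄_{lvl t}`, starting at `Z_0 = o` with level `lvl 0 = 1`, where the level
increases by one precisely when the walk has made `N k` visits to `∂B̄_k` since the
level last changed. -/
structure EGS (Gbar : SimpleGraph V) (o : V) (Bset : ℕ → Set V) (N : ℕ → ℕ)
    {Ω : Type*} (mΩ : MeasurableSpace Ω) (μ : Measure Ω) where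
  F : Filtration ℕ mΩ
  /-- the walk -/
  Z : ℕ → Ω → V
  /-- the current level `k`, so that the current ball is `B̄_{lvl t}` -/
  lvl : ℕ → Ω → ℕ
  Z_adapted : ∀ t (v : V), MeasurableSet[F t] {ω | Z t ω = v}
  Z_zero : ∀ ω, Z 0 ω = o
  lvl_zero : ∀ ω, lvl 0 ω = 1
  lvl_succ : ∀ t ω, lvl (t + 1) ω =
    if {s | s ≤ t ∧ lvl s ω = lvl t ω ∧
          Z s ω ∈ Boundary Gbar (siteSubgraph Gbar (Bset (lvl t ω)))}.ncard
        = N (lvl t ω)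
      then lvl t ω + 1 else lvl t ω
  Z_mem : ∀ ω t, Z t ω ∈ Bset (lvl t ω)
  step : ∀ t (v : V),
    μ[(fun ω => if Z (t + 1) ω = v then (1 : ℝ) else 0) | F t]
      =ᵐ[μ] fun ω =>
        if (siteSubgraph Gbar (Bset (lvl t ω))).Adj (Z t ω) v
          then (((siteSubgraph Gbar (Bset (lvl t ω))).neighborSet (Z t ω)).ncard : ℝ)⁻¹
          else 0


/-- A *remotely open by touch* (ROBT) interaction model on `ℤ^d` : a simple random
walk `R_t` on nondecreasing connected growing domains `D_t ⊆ ℤ^d` starting at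
`R_0 = 0`, such that the domain grows only when `R_t ∈ ∂D_t`, the number of edges
added at each such time being uniformly bounded. -/
structure ROBT (d : ℕ) {Ω : Type*} (mΩ : MeasurableSpace Ω) (μ : Measure Ω) where
  F : Filtration ℕ mΩ
  /-- the walk -/
  R : ℕ → Ω → (Fin d → ℤ)
  /-- the growing domains -/
  D : ℕ → Ω → (latticeGraph d).Subgraph
  R_adapted : ∀ t (v : Fin d → ℤ), MeasurableSet[F t] {ω | R t ω = v}
  D_adj_adapted : ∀ t (x y : Fin d → ℤ), MeasurableSet[F t] {ω | (D t ω).Adj x y}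
  D_verts_adapted : ∀ t (x : Fin d → ℤ), MeasurableSet[F t] {ω | x ∈ (D t ω).verts}
  mono : ∀ ω t, D t ω ≤ D (t + 1) ω
  conn : ∀ ω t, (D t ω).Connected
  R_mem : ∀ ω t, R t ω ∈ (D t ω).verts
  R_zero : ∀ ω, R 0 ω = 0
  grow_only_at_bdry : ∀ t ω,
    R t ω ∉ Boundary (latticeGraph d) (D t ω) → D (t + 1) ω = D t ω
  bounded_growth : ∃ M : ℕ, ∀ t ω,
    ((D (t + 1) ω).edgeSet \ (D t ω).edgeSet).ncard ≤ M
  step : ∀ t (v : Fin d → ℤ),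
    μ[(fun ω => if R (t + 1) ω = v then (1 : ℝ) else 0) | F t]
      =ᵐ[μ] fun ω =>
        if (D t ω).Adj (R t ω) v
          then (((D t ω).neighborSet (R t ω)).ncard : ℝ)⁻¹ else 0

/-- The lattice points of the dilated set `f • K ⊆ ℝ^d`. -/
def latticePts (d : ℕ) (f : ℝ) (K : Set (Fin d → ℝ)) : Set (Fin d → ℤ) :=
  {x | (fun i => (x i : ℝ)) ∈ f • K}

/-- `K ⊆ ℝ^d` is a `γ`-*almost regular shape* for growing domains `D_t` in `ℤ^d` :
`D_t ⊇ f(t)K ∩ ℤ^d` for all large `t` and some nondecreasing `f ≥ 1`, such that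
`d^{D_t}(z, f(t)K) ≤ γ log f(t)` for all `z ∈ D_t`. -/
def AlmostRegular (d : ℕ) (γ : ℝ) (K : Set (Fin d → ℝ))
    (Dp : ℕ → (latticeGraph d).Subgraph) : Prop :=
  ∃ f : ℕ → ℝ, Monotone f ∧ (∀ t, 1 ≤ f t) ∧ ∃ T : ℕ, ∀ t ≥ T,
    (∀ x ∈ latticePts d (f t) K, x ∈ (Dp t).verts) ∧
    ∀ z ∈ (Dp t).verts, ∃ y ∈ latticePts d (f t) K,
      (Dp t).spanningCoe.Reachable z y ∧
        (((Dp t).spanningCoe.dist z y : ℝ)) ≤ γ * Real.log (f t)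

/-- The Euclidean unit ball of `ℝ^d`. -/
def euclBall (d : ℕ) : Set (Fin d → ℝ) := {v | (∑ i, (v i) ^ 2) ≤ 1}


/-- The *first open by touch* walk on `ℤ²` opening only the right/up/down edges:
upon the first visit to a site it opens the three right/up/down adjacent edges and
stays put for one step; at all other times it moves as simple random walk on the
current domain. -/
structure FOBT {Ω : Type*} (mΩ : MeasurableSpace Ω) (μ : Measure Ω) where
  F : Filtration ℕ mΩ
  /-- the walk -/
  E : ℕ → Ω → (Fin 2 → ℤ)
  /-- the growing domains -/
  D : ℕ → Ω → (latticeGraph 2).Subgraph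
  E_adapted : ∀ t (v : Fin 2 → ℤ), MeasurableSet[F t] {ω | E t ω = v}
  D_adj_adapted : ∀ t (x y : Fin 2 → ℤ), MeasurableSet[F t] {ω | (D t ω).Adj x y}
  mono : ∀ ω t, D t ω ≤ D (t + 1) ω
  E_mem : ∀ ω t, E t ω ∈ (D t ω).verts
  E_zero : ∀ ω, E 0 ω = 0
  /-- at a first visit : open the right/up/down edges, and stay put for one step -/
  first_visit : ∀ t ω, (∀ s < t, E s ω ≠ E t ω) →
    E (t + 1) ω = E t ω ∧ D (t + 1) ω = D t ω ⊔ rud (E t ω)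
  /-- otherwise the domain does not change … -/
  non_first_visit : ∀ t ω, (∃ s < t, E s ω = E t ω) → D (t + 1) ω = D t ω
  /-- … and the walk takes a simple random walk step on the current domain -/
  step : ∀ t (v : Fin 2 → ℤ), ∀ᵐ ω ∂μ,
    (∃ s < t, E s ω = E t ω) →
      (μ[(fun ω' => if E (t + 1) ω' = v then (1 : ℝ) else 0) | F t]) ω
        = if (D t ω).Adj (E t ω) v
            then (((D t ω).neighborSet (E t ω)).ncard : ℝ)⁻¹ else 0

/-- A *probing simple random walk* (PSRW) on `ℤ^d` : starting at `K_0 = 0` with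
domain `A_0 = {0}`, at each time `t` it sends an `F_t`-adapted number `m t` of probes,
each adding precisely one site to the domain (all edges of `ℤ^d` connecting added sites
to the existing domain being opened), after which the walk moves to a uniformly chosen
neighbor of `K_t` in the new domain. -/
structure PSRW (d : ℕ) {Ω : Type*} (mΩ : MeasurableSpace Ω) (μ : Measure Ω) where
  F : Filtration ℕ mΩ
  /-- the walk -/
  K : ℕ → Ω → (Fin d → ℤ)
  /-- the (vertex sets of the) growing domains -/
  A : ℕ → Ω → Set (Fin d → ℤ)
  /-- the number of probes sent at each time -/
  m : ℕ → Ω → ℕ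
  K_adapted : ∀ t (v : Fin d → ℤ), MeasurableSet[F t] {ω | K t ω = v}
  A_adapted : ∀ t (x : Fin d → ℤ), MeasurableSet[F (t + 1)] {ω | x ∈ A (t + 1) ω}
  m_adapted : ∀ t (n : ℕ), MeasurableSet[F t] {ω | m t ω = n}
  A_zero : ∀ ω, A 0 ω = {0}
  K_zero : ∀ ω, K 0 ω = 0
  mono : ∀ ω t, A t ω ⊆ A (t + 1) ω
  add_fin : ∀ ω t, (A (t + 1) ω \ A t ω).Finite
  add_card : ∀ ω t, (A (t + 1) ω \ A t ω).ncard = m t ω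
  K_mem : ∀ ω t, K t ω ∈ A t ω
  step : ∀ t (v : Fin d → ℤ),
    μ[(fun ω => if K (t + 1) ω = v then (1 : ℝ) else 0)
        | (F t) ⊔ MeasurableSpace.generateFrom
            {s | ∃ x : Fin d → ℤ, s = {ω | x ∈ A (t + 1) ω}}]
      =ᵐ[μ] fun ω =>
        if (siteSubgraph (latticeGraph d) (A (t + 1) ω)).Adj (K t ω) v
          then (((siteSubgraph (latticeGraph d) (A (t + 1) ω)).neighborSet
                  (K t ω)).ncard : ℝ)⁻¹
          else 0

/-- The running average number of probes `m̄_t = t⁻¹ ∑_{s=1}^t m(s)`. -/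
noncomputable def PSRW.mbar {d : ℕ} {Ω : Type*} {mΩ : MeasurableSpace Ω}
    {μ : Measure Ω} (W : PSRW d mΩ μ) (t : ℕ) (ω : Ω) : ℝ :=
  (t : ℝ)⁻¹ * ∑ s ∈ Finset.Icc 1 t, (W.m s ω : ℝ)

/-- The probability that simple random walk on `ℤ^d` started at `x` first exits the
set `S` at the site `y`. -/
noncomputable def exitProb (d : ℕ) (S : Set (Fin d → ℤ)) (x y : Fin d → ℤ) : ℝ≥0∞ :=
  ∑' w : {w : (latticeGraph d).Walk x y // ∀ z ∈ w.support.dropLast, z ∈ S},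
    walkWeight (latticeGraph d) w.1

/-- A probing simple random walk with *unguided* probes: each probe performs an
independent simple random walk on `ℤ^d` from the current position `K_t` of the walker,
until it first exits the current domain, and the site where it exits (chosen according
to the hitting measure of the complement of the current domain) is added. Probes are
sent sequentially, each seeing the domain as enlarged by the previous probes. -/
structure UnguidedPSRW (d : ℕ) {Ω : Type*} (mΩ : MeasurableSpace Ω) (μ : Measure Ω)
    extends PSRW d mΩ μ where
  /-- `P t j` is the site added by the `j`-th probe sent at time `t` -/
  P : ℕ → ℕ → Ω → (Fin d → ℤ)
  probe_sets : ∀ t ω, A (t + 1) ω = A t ω ∪ {x | ∃ j < m t ω, P t j ω = x}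
  probe_new : ∀ t j ω, j < m t ω →
    P t j ω ∉ A t ω ∪ {x | ∃ i < j, P t i ω = x}
  /-- each probe site has the law of the exit site of simple random walk from `K_t`,
  out of the domain enlarged by the previously sent probes -/
  probe_law : ∀ t j (y : Fin d → ℤ),
    μ[(fun ω => if j < m t ω ∧ P t j ω = y then (1 : ℝ) else 0)
        | (F t) ⊔ MeasurableSpace.generateFrom
            {s | ∃ (i : ℕ) (x : Fin d → ℤ), i < j ∧ s = {ω | P t i ω = x}}]
      =ᵐ[μ] fun ω =>
        if j < m t ω ∧ y ∉ A t ω ∪ {x | ∃ i < j, P t i ω = x}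
          then (exitProb d (A t ω ∪ {x | ∃ i < j, P t i ω = x}) (K t ω) y).toReal
          else 0


/-- The set `C_k` of sites of the ball `B̄_k` at graph distance one from `∂B̄_k`. -/
noncomputable def CSet (Gbar : SimpleGraph V) (Bset : ℕ → Set V) (k : ℕ) : Set V :=
  {x | x ∈ Bset k ∧
    sInf ((fun y => Gbar.edist x y) ''
      Boundary Gbar (siteSubgraph Gbar (Bset k))) = 1}


section AuxWalk

lemma walk_of_chain (H : SimpleGraph V) :
    ∀ (l : List V) (a b : V), List.Chain H.Adj a l → (a :: l).getLast? = some b →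
      ∃ w : H.Walk a b, w.length = l.length := by
  intro l
  induction l with
  | nil =>
    intro a b _ hlast
    simp only [List.getLast?_singleton, Option.some.injEq] at hlast
    subst hlast
    exact ⟨SimpleGraph.Walk.nil, rfl⟩
  | cons c t ih =>
    intro a b hchain hlast
    replace hchain := List.isChain_cons_cons.mp hchain
    rw [List.getLast?_cons_cons] at hlast
    obtain ⟨w, hw⟩ := ih c b hchain.2 hlast
    exact ⟨SimpleGraph.Walk.cons hchain.1 w, by simp [hw]⟩

lemma chain_of_walk (H : SimpleGraph V) {a b : V} (w : H.Walk a b) :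
    List.Chain H.Adj a w.support.tail ∧ (a :: w.support.tail).getLast? = some b ∧
      w.support.tail.length = w.length := by
  induction w with
  | nil => simp [List.Chain]
  | @cons u c b h p ih =>
    rw [SimpleGraph.Walk.support_cons, List.tail_cons]
    refine ⟨SimpleGraph.Walk.isChain_adj_cons_support h p, ?_, ?_⟩
    · have hp := p.support_eq_cons
      rw [hp, List.getLast?_cons_cons, ← hp, hp]
      exact ih.2.1
    · rw [SimpleGraph.Walk.length_support]
      simp

lemma edist_le_iff_chain (H : SimpleGraph V) (x y : V) (r : ℕ) :
    H.edist x y ≤ (r : ℕ∞) ↔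
      ∃ l : List V, List.Chain H.Adj x l ∧ (x :: l).getLast? = some y ∧ l.length ≤ r := by
  constructor
  · intro h
    have hne : H.edist x y ≠ ⊤ := ne_top_of_le_ne_top (ENat.coe_ne_top _) h
    obtain ⟨w, hw⟩ := SimpleGraph.exists_walk_of_edist_ne_top hne
    obtain ⟨h1, h2, h3⟩ := chain_of_walk H w
    refine ⟨w.support.tail, h1, h2, ?_⟩
    rw [h3]
    have : (w.length : ℕ∞) ≤ (r : ℕ∞) := by rw [hw]; exact h
    exact_mod_cast this
  · rintro ⟨l, h1, h2, h3⟩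
    obtain ⟨w, hw⟩ := walk_of_chain H l x y h1 h2
    calc H.edist x y ≤ (w.length : ℕ∞) := SimpleGraph.edist_le w
      _ ≤ (r : ℕ∞) := by exact_mod_cast hw ▸ h3

lemma ball_finite (Gbar : SimpleGraph V) (hlf : Gbar.LocallyFinite) (o : V) :
    ∀ n : ℕ, {x : V | Gbar.edist o x ≤ (n : ℕ∞)}.Finite := by
  intro n
  induction n with
  | zero =>
    refine (Set.finite_singleton o).subset fun x hx => ?_
    simp only [Set.mem_setOf_eq, Nat.cast_zero, nonpos_iff_eq_zero,
      SimpleGraph.edist_eq_zero_iff] at hx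
    simp [hx]
  | succ n ih =>
    have hsub : {x : V | Gbar.edist o x ≤ ((n+1 : ℕ) : ℕ∞)} ⊆
        {x | Gbar.edist o x ≤ (n : ℕ∞)} ∪
          ⋃ y ∈ {x : V | Gbar.edist o x ≤ (n : ℕ∞)}, Gbar.neighborSet y := by
      intro x hx
      simp only [Set.mem_setOf_eq] at hx
      have hne : Gbar.edist o x ≠ ⊤ := ne_top_of_le_ne_top (ENat.coe_ne_top _) hx
      obtain ⟨w, hw⟩ := SimpleGraph.exists_walk_of_edist_ne_top hne
      cases hwr : w.reverse with
      | nil =>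
        exact Set.mem_union_left _ (by simp [SimpleGraph.edist_self])
      | cons h p =>
        right
        rename_i c
        have hlen : (p.length : ℕ∞) + 1 = Gbar.edist o x := by
          rw [← hw]
          have := congrArg SimpleGraph.Walk.length hwr
          simp only [SimpleGraph.Walk.length_reverse, SimpleGraph.Walk.length_cons] at this
          rw [this]
          push_cast
          ring
        have hpl : (p.length : ℕ∞) ≤ (n : ℕ∞) := by
          have h1 : ((p.length + 1 : ℕ) : ℕ∞) ≤ ((n + 1 : ℕ) : ℕ∞) := by
            push_cast
            rw [hlen]
            exact_mod_cast hx
          have h2 : p.length + 1 ≤ n + 1 := by exact_mod_cast h1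
          exact_mod_cast Nat.le_of_succ_le_succ h2
        have hc : c ∈ {x : V | Gbar.edist o x ≤ (n : ℕ∞)} := by
          calc Gbar.edist o c = Gbar.edist c o := Gbar.edist_comm
            _ ≤ (p.length : ℕ∞) := SimpleGraph.edist_le p
            _ ≤ (n : ℕ∞) := hpl
        exact Set.mem_biUnion hc h.symm
    exact (ih.union (ih.biUnion fun y _ => by
      haveI := hlf y; exact (Gbar.neighborSet y).toFinite)).subset hsub

lemma countable_of_connected (Gbar : SimpleGraph V) (hlf : Gbar.LocallyFinite)
    (hconn : Gbar.Connected) (o : V) : Countable V := by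
  have hcov : (Set.univ : Set V) = ⋃ n : ℕ, {x : V | Gbar.edist o x ≤ (n : ℕ∞)} := by
    ext x
    simp only [Set.mem_univ, true_iff, Set.mem_iUnion, Set.mem_setOf_eq]
    have hne : Gbar.edist o x ≠ ⊤ :=
      SimpleGraph.edist_ne_top_iff_reachable.mpr (hconn.preconnected o x)
    obtain ⟨k, hk⟩ := WithTop.ne_top_iff_exists.mp hne
    exact ⟨k, le_of_eq hk.symm⟩
  have hc : (Set.univ : Set V).Countable := by
    rw [hcov]
    exact Set.countable_iUnion fun n => (ball_finite Gbar hlf o n).countable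
  exact Set.countable_univ_iff.mp hc

variable {Gbar : SimpleGraph V} {o : V} {Ω : Type*} {mΩ : MeasurableSpace Ω}
  {μ : Measure Ω}

lemma meas_chain (W : GrowingSRW Gbar o mΩ μ) (t : ℕ) :
    ∀ (l : List V) (a : V), MeasurableSet[W.F t] {ω | List.Chain (W.G t ω).Adj a l} := by
  intro l
  induction l with
  | nil =>
    intro a
    have : {ω | List.Chain (W.G t ω).Adj a List.nil} = Set.univ := by
      ext ω; simp [List.Chain]
    rw [this]
    exact MeasurableSet.univ
  | cons b l ih =>
    intro a
    have : {ω | List.Chain (W.G t ω).Adj a (b :: l)} =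
        {ω | (W.G t ω).Adj a b} ∩ {ω | List.Chain (W.G t ω).Adj b l} := by
      ext ω; simp [List.Chain, List.isChain_cons_cons]
    rw [this]
    exact (W.G_adj_adapted t a b).inter (ih b)

lemma meas_edist_le [Countable V] (W : GrowingSRW Gbar o mΩ μ) (t r : ℕ) (y : V) :
    MeasurableSet[W.F t] {ω | (W.G t ω).spanningCoe.edist o y ≤ (r : ℕ∞)} := by
  have heq : {ω | (W.G t ω).spanningCoe.edist o y ≤ (r : ℕ∞)} =
      ⋃ (l : List V), ⋃ (_ : (o :: l).getLast? = some y ∧ l.length ≤ r),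
        {ω | List.Chain (W.G t ω).Adj o l} := by
    ext ω
    simp only [Set.mem_setOf_eq, Set.mem_iUnion, edist_le_iff_chain]
    constructor
    · rintro ⟨l, h1, h2, h3⟩
      exact ⟨l, ⟨h2, h3⟩, h1⟩
    · rintro ⟨l, ⟨h2, h3⟩, h1⟩
      exact ⟨l, h1, h2, h3⟩
  rw [heq]
  exact MeasurableSet.iUnion fun l => MeasurableSet.iUnion fun _ => meas_chain W t l o

lemma meas_edist_leX [Countable V] (W : GrowingSRW Gbar o mΩ μ) (t r : ℕ) :
    MeasurableSet[W.F t] {ω | (W.G t ω).spanningCoe.edist o (W.X t ω) ≤ (r : ℕ∞)} := by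
  have heq : {ω | (W.G t ω).spanningCoe.edist o (W.X t ω) ≤ (r : ℕ∞)} =
      ⋃ (x : V), ({ω | W.X t ω = x} ∩ {ω | (W.G t ω).spanningCoe.edist o x ≤ (r : ℕ∞)}) := by
    ext ω
    simp only [Set.mem_setOf_eq, Set.mem_iUnion, Set.mem_inter_iff]
    constructor
    · intro h
      exact ⟨W.X t ω, rfl, h⟩
    · rintro ⟨x, hx, h⟩
      rwa [hx]
  rw [heq]
  exact MeasurableSet.iUnion fun x =>
    (W.X_adapted t x).inter (meas_edist_le W t r x)

lemma cover_step (W : GrowingSRW Gbar o mΩ μ) (r k : ℕ) (ω : Ω)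
    (h0 : (W.G k ω).spanningCoe.edist o (W.X k ω) ≠ 0)
    (hle : (W.G k ω).spanningCoe.edist o (W.X k ω) ≤ ((r + 1 : ℕ) : ℕ∞)) :
    ∃ x y : V, W.X k ω = x ∧ (W.G k ω).Adj x y ∧
      (W.G k ω).spanningCoe.edist o y ≤ (r : ℕ∞) := by
  obtain ⟨x0, hx0⟩ : ∃ x0, W.X k ω = x0 := ⟨_, rfl⟩
  rw [hx0] at h0 hle ⊢
  have hne : (W.G k ω).spanningCoe.edist o x0 ≠ ⊤ :=
    ne_top_of_le_ne_top (ENat.coe_ne_top _) hle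
  obtain ⟨w, hw⟩ := SimpleGraph.exists_walk_of_edist_ne_top hne
  cases hwr : w.reverse with
  | nil =>
    exact absurd (by simp [SimpleGraph.edist_self]) h0
  | cons h p =>
    rename_i c
    refine ⟨x0, c, rfl, h, ?_⟩
    have hlen : w.length = p.length + 1 := by
      have := congrArg SimpleGraph.Walk.length hwr
      simpa using this
    have hwl : w.length ≤ r + 1 := by
      have : (w.length : ℕ∞) ≤ ((r + 1 : ℕ) : ℕ∞) := by rw [hw]; exact hle
      exact_mod_cast this
    have hpl : p.length ≤ r := by omega
    calc (W.G k ω).spanningCoe.edist o c = (W.G k ω).spanningCoe.edist c o :=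
          SimpleGraph.edist_comm
      _ ≤ (p.length : ℕ∞) := SimpleGraph.edist_le p
      _ ≤ (r : ℕ∞) := by exact_mod_cast hpl

end AuxWalk

/-- For simple random walk on monotone increasing connected growing
graphs `G_t ⊆ Ḡ`, on the event of transience of `0` (i.e. `X_t = 0` finitely often),
almost surely the graph distance `d^{G_t}(0, X_t)` tends to infinity as `t → ∞`. -/
theorem srw_growing_dist_tendsto_atTop_of_transient
    {V : Type*} (Gbar : SimpleGraph V) (o : V)
    (hlf : Gbar.LocallyFinite) (hconn : Gbar.Connected) (hinf : Infinite V)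
    {Ω : Type*} (mΩ : MeasurableSpace Ω) (μ : Measure Ω) [IsProbabilityMeasure μ]
    (W : GrowingSRW Gbar o mΩ μ) :
    ∀ᵐ ω ∂μ, {t | W.X t ω = o}.Finite →
      ∀ r : ℕ, ∀ᶠ t in atTop,
        (r : ℕ∞) < (W.G t ω).spanningCoe.edist o (W.X t ω) := by
  haveI : Countable V := countable_of_connected Gbar hlf hconn o
  have key : ∀ r : ℕ, ∀ᵐ ω ∂μ, {t | W.X t ω = o}.Finite →
      {t : ℕ | (W.G t ω).spanningCoe.edist o (W.X t ω) ≤ (r : ℕ∞)}.Finite := by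
    intro r
    induction r with
    | zero =>
      filter_upwards with ω hfin
      refine hfin.subset fun t ht => ?_
      simp only [Set.mem_setOf_eq, Nat.cast_zero, nonpos_iff_eq_zero,
        SimpleGraph.edist_eq_zero_iff] at ht
      exact ht.symm
    | succ r ih =>
      -- the events for Borel-Cantelli : distance at most r at time t
      set s : ℕ → Set Ω :=
        fun t => {ω | (W.G t ω).spanningCoe.edist o (W.X t ω) ≤ (r : ℕ∞)} with hs_def
      have hs : ∀ t, MeasurableSet[W.F t] (s t) := fun t => meas_edist_leX W t r
      -- uniform degree bound on the ball of radius r+1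
      set Bf : Finset V := (ball_finite Gbar hlf o (r + 1)).toFinset with hBf
      set D : ℕ := Bf.sup fun x => (Gbar.neighborSet x).ncard with hD
      have hDbound : ∀ x : V, Gbar.edist o x ≤ ((r + 1 : ℕ) : ℕ∞) →
          (Gbar.neighborSet x).ncard ≤ D := by
        intro x hx
        exact Finset.le_sup (s := Bf) (f := fun x => (Gbar.neighborSet x).ncard)
          ((ball_finite Gbar hlf o (r + 1)).mem_toFinset.mpr hx)
      have hDpos : 0 < D := by
        obtain ⟨z, hz⟩ := exists_ne o
        obtain ⟨w⟩ := hconn.preconnected o z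
        cases w with
        | nil => exact absurd rfl hz
        | cons h p =>
          rename_i c
          have hfin : (Gbar.neighborSet o).Finite := by
            haveI := hlf o; exact Set.toFinite _
          calc 0 < (Gbar.neighborSet o).ncard := (Set.ncard_pos hfin).mpr ⟨c, h⟩
            _ ≤ D := hDbound o (by simp [SimpleGraph.edist_self])
      set δ : ℝ := (D : ℝ)⁻¹ with hδ
      have hδpos : 0 < δ := inv_pos.mpr (Nat.cast_pos.mpr hDpos)
      set g : ℕ → Ω → ℝ := fun k => μ[(s (k + 1)).indicator (1 : Ω → ℝ)|W.F k] with hg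
      have hint : ∀ (A : Set Ω), MeasurableSet A → Integrable (A.indicator (1 : Ω → ℝ)) μ :=
        fun A hA => (integrable_const 1).indicator hA
      -- the one-step lower bound
      have hpair : ∀ (k : ℕ) (x y : V), ∀ᵐ ω ∂μ,
          (W.X k ω = x ∧ (W.G k ω).Adj x y ∧
            (W.G k ω).spanningCoe.edist o y ≤ (r : ℕ∞)) → δ ≤ g k ω := by
        intro k x y
        set T : Set Ω := {ω | W.X k ω = x ∧ (W.G k ω).Adj x y ∧
          (W.G k ω).spanningCoe.edist o y ≤ (r : ℕ∞)} with hT_def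
        have hT : MeasurableSet[W.F k] T := by
          have : T = {ω | W.X k ω = x} ∩ ({ω | (W.G k ω).Adj x y} ∩
              {ω | (W.G k ω).spanningCoe.edist o y ≤ (r : ℕ∞)}) := rfl
          rw [this]
          exact (W.X_adapted k x).inter ((W.G_adj_adapted k x y).inter (meas_edist_le W k r y))
        set A : Set Ω := {ω | W.X (k + 1) ω = y} with hA_def
        have hAm : MeasurableSet A := W.F.le (k + 1) _ (W.X_adapted (k + 1) y)
        have hsm : MeasurableSet (s (k + 1)) := W.F.le (k + 1) _ (hs (k + 1))
        have hTm : MeasurableSet T := W.F.le k _ hT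
        have hstep := W.step k y
        have hfun : (fun ω => if W.X (k + 1) ω = y then (1 : ℝ) else 0)
            = A.indicator (1 : Ω → ℝ) := by
          funext ω
          by_cases h : W.X (k + 1) ω = y <;> simp [hA_def, Set.indicator_apply, h]
        rw [hfun] at hstep
        have hle : T.indicator (A.indicator (1 : Ω → ℝ)) ≤ (s (k + 1)).indicator (1 : Ω → ℝ) := by
          intro ω
          by_cases hωT : ω ∈ T
          · rw [Set.indicator_of_mem hωT]
            by_cases hωA : ω ∈ A
            · rw [Set.indicator_of_mem hωA]
              have hωs : ω ∈ s (k + 1) := by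
                have hmono : (W.G k ω).spanningCoe ≤ (W.G (k + 1) ω).spanningCoe :=
                  SimpleGraph.Subgraph.spanningCoe_le_of_le (W.mono ω k)
                show (W.G (k + 1) ω).spanningCoe.edist o (W.X (k + 1) ω) ≤ (r : ℕ∞)
                rw [show W.X (k + 1) ω = y from hωA]
                calc (W.G (k + 1) ω).spanningCoe.edist o y
                    ≤ (W.G k ω).spanningCoe.edist o y := SimpleGraph.edist_anti hmono
                  _ ≤ (r : ℕ∞) := hωT.2.2
              rw [Set.indicator_of_mem hωs]
            · rw [Set.indicator_of_notMem hωA]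
              exact Set.indicator_nonneg (fun _ _ => zero_le_one) ω
          · rw [Set.indicator_of_notMem hωT]
            exact Set.indicator_nonneg (fun _ _ => zero_le_one) ω
        have hc1 := condExp_indicator (μ := μ) (m := W.F k) (hint A hAm) hT
        have hc2 := condExp_mono (μ := μ) (m := W.F k)
          ((hint A hAm).indicator hTm) (hint _ hsm) (Eventually.of_forall hle)
        filter_upwards [hc1, hc2, hstep] with ω h1 h2 h3 hωT
        have hmemT : ω ∈ T := hωT
        have e2 : (μ[A.indicator (1 : Ω → ℝ)|W.F k]) ω ≤ g k ω := by
          have e1 : (T.indicator (μ[A.indicator (1 : Ω → ℝ)|W.F k])) ω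
              = (μ[A.indicator (1 : Ω → ℝ)|W.F k]) ω :=
            Set.indicator_of_mem (s := T) hmemT _
          rw [← e1, ← h1]
          exact h2
        have e3 : (μ[A.indicator (1 : Ω → ℝ)|W.F k]) ω
            = (((W.G k ω).neighborSet x).ncard : ℝ)⁻¹ := by
          rw [h3, hωT.1, if_pos hωT.2.1]
        have hyadj : (W.G k ω).Adj x y := hωT.2.1
        have hGb : Gbar.edist o x ≤ ((r + 1 : ℕ) : ℕ∞) := by
          have h4 : Gbar.edist o y ≤ (r : ℕ∞) :=
            le_trans (SimpleGraph.edist_anti ((W.G k ω).spanningCoe_le)) hωT.2.2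
          have h5 : Gbar.edist y x = 1 :=
            SimpleGraph.edist_eq_one_iff_adj.mpr hyadj.adj_sub.symm
          calc Gbar.edist o x ≤ Gbar.edist o y + Gbar.edist y x := Gbar.edist_triangle
            _ ≤ (r : ℕ∞) + 1 := by rw [h5]; exact add_le_add_left h4 1
            _ = ((r + 1 : ℕ) : ℕ∞) := by push_cast; rfl
        have hnfinb : (Gbar.neighborSet x).Finite := by haveI := hlf x; exact Set.toFinite _
        have hnfin : ((W.G k ω).neighborSet x).Finite :=
          hnfinb.subset ((W.G k ω).neighborSet_subset x)
        have hpos : 0 < ((W.G k ω).neighborSet x).ncard := (Set.ncard_pos hnfin).mpr ⟨y, hyadj⟩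
        have hle2 : ((W.G k ω).neighborSet x).ncard ≤ D :=
          le_trans (Set.ncard_le_ncard ((W.G k ω).neighborSet_subset x) hnfinb) (hDbound x hGb)
        calc δ = (D : ℝ)⁻¹ := rfl
          _ ≤ (((W.G k ω).neighborSet x).ncard : ℝ)⁻¹ := by
              apply inv_anti₀ (Nat.cast_pos.mpr hpos) (Nat.cast_le.mpr hle2)
          _ = (μ[A.indicator (1 : Ω → ℝ)|W.F k]) ω := e3.symm
          _ ≤ g k ω := e2
      have hpa : ∀ᵐ ω ∂μ, ∀ (k : ℕ) (x y : V),
          (W.X k ω = x ∧ (W.G k ω).Adj x y ∧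
            (W.G k ω).spanningCoe.edist o y ≤ (r : ℕ∞)) → δ ≤ g k ω :=
        ae_all_iff.2 fun k => ae_all_iff.2 fun x => ae_all_iff.2 fun y => hpair k x y
      have hnn : ∀ᵐ ω ∂μ, ∀ k, 0 ≤ g k ω :=
        ae_all_iff.2 fun k => condExp_nonneg
          (Eventually.of_forall (fun ω => Set.indicator_nonneg (fun _ _ => zero_le_one) ω))
      have hBC := MeasureTheory.ae_mem_limsup_atTop_iff μ (ℱ := W.F) hs
      filter_upwards [hBC, ih, hpa, hnn] with ω hbc hih hpa0 hnn0 hfin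
      have h1 : {t : ℕ | (W.G t ω).spanningCoe.edist o (W.X t ω) ≤ (r : ℕ∞)}.Finite := hih hfin
      have hnotlim : ω ∉ limsup s atTop := by
        intro hmem
        have hfreq := Filter.mem_limsup_iff_frequently_mem.mp hmem
        obtain ⟨N, hN⟩ := h1.bddAbove
        obtain ⟨m, hm1, hm2⟩ := (Filter.frequently_atTop.mp hfreq) (N + 1)
        exact absurd (hN hm2) (by omega)
      have hnt : ¬ Tendsto (fun n => ∑ k ∈ Finset.range n, g k ω) atTop atTop :=
        fun ht => hnotlim (hbc.mpr ht)
      have hmono : Monotone (fun n => ∑ k ∈ Finset.range n, g k ω) :=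
        monotone_nat_of_le_succ fun n => by
          rw [Finset.sum_range_succ]
          exact le_add_of_nonneg_right (hnn0 n)
      rcases tendsto_of_monotone hmono with h | h
      · exact absurd h hnt
      obtain ⟨l, hl⟩ := h
      have hbdd : ∀ n, ∑ k ∈ Finset.range n, g k ω ≤ l := fun n => hmono.ge_of_tendsto hl n
      have hTfin : {t : ℕ | δ ≤ g t ω}.Finite := by
        by_contra hTinf
        obtain ⟨n0, hn0⟩ := exists_nat_gt (l / δ)
        have hI : {t : ℕ | δ ≤ g t ω}.Infinite := hTinf
        obtain ⟨u, hu_sub, hu_card⟩ := hI.exists_subset_card_eq n0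
        have hsum1 : (n0 : ℝ) * δ ≤ ∑ k ∈ u, g k ω := by
          rw [← hu_card]
          have := Finset.card_nsmul_le_sum u (fun k => g k ω) δ fun k hk => hu_sub hk
          rwa [nsmul_eq_mul] at this
        have hsum2 : ∑ k ∈ u, g k ω ≤ ∑ k ∈ Finset.range (u.sup id + 1), g k ω :=
          Finset.sum_le_sum_of_subset_of_nonneg
            (fun k hk => Finset.mem_range.mpr (Nat.lt_succ_of_le (Finset.le_sup (f := id) hk)))
            (fun k _ _ => hnn0 k)
        have hcon : (n0 : ℝ) * δ ≤ l := le_trans hsum1 (le_trans hsum2 (hbdd _))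
        have : l < n0 * δ := by rwa [div_lt_iff₀ hδpos] at hn0
        linarith
      have hzero : {t : ℕ | (W.G t ω).spanningCoe.edist o (W.X t ω) = 0}.Finite :=
        hfin.subset fun t ht => by
          simp only [Set.mem_setOf_eq, SimpleGraph.edist_eq_zero_iff] at ht
          exact ht.symm
      refine (hTfin.union hzero).subset ?_
      intro t ht
      simp only [Set.mem_setOf_eq] at ht
      by_cases h0 : (W.G t ω).spanningCoe.edist o (W.X t ω) = 0
      · exact Or.inr h0
      · left
        obtain ⟨x, y, hx, hadj, hy⟩ := cover_step W r t ω h0 (by exact_mod_cast ht)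
        exact hpa0 t x y ⟨hx, hadj, hy⟩
  filter_upwards [ae_all_iff.2 key] with ω h hfin r
  have hf2 := h r hfin
  obtain ⟨N, hN⟩ := hf2.bddAbove
  rw [eventually_atTop]
  refine ⟨N + 1, fun t ht => ?_⟩
  by_contra hcon
  push_neg at hcon
  have hmem : t ∈ {t : ℕ | (W.G t ω).spanningCoe.edist o (W.X t ω) ≤ (r : ℕ∞)} := hcon
  have := hN hmem
  omega


end MonotoneWalk
end

section
/- Let X_t be a simple random walk on a nondecreasing sequence of connected growing graphs G_t ⊆ Ḡ, with X_0 = 0 and B^Ḡ(0,1) ⊆ G_0. Then with probability one, the site 0 is transient for the sample path of the walk if and only if every vertex of Ḡ is transient for this sample path. -/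
open MeasureTheory ProbabilityTheory Filter Set
open scoped ENNReal Classical Pointwise

namespace MonotoneWalk

variable {V : Type*}

section TransienceProof

open MeasureTheory

variable {V : Type*} {Gbar : SimpleGraph V}

/-- `ConnTo H o k x` : there is a walk of length at most `k` from `x` to `o`
inside the subgraph `H`. -/
def ConnTo (H : Gbar.Subgraph) (o : V) : ℕ → V → Prop
  | 0, x => x = o
  | (k+1), x => x = o ∨ ∃ y, H.Adj x y ∧ ConnTo H o k y

lemma connTo_zero_iff {H : Gbar.Subgraph} {o x : V} : ConnTo H o 0 x ↔ x = o := Iff.rfl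

lemma connTo_succ_iff {H : Gbar.Subgraph} {o x : V} {k : ℕ} :
    ConnTo H o (k+1) x ↔ x = o ∨ ∃ y, H.Adj x y ∧ ConnTo H o k y := Iff.rfl

lemma ConnTo.mono {H H' : Gbar.Subgraph} (hle : H ≤ H') {o : V} :
    ∀ k x, ConnTo H o k x → ConnTo H' o k x := by
  intro k
  induction k with
  | zero => intro x h; exact h
  | succ k ih =>
    intro x h
    rcases connTo_succ_iff.1 h with rfl | ⟨y, hadj, hc⟩
    · exact connTo_succ_iff.2 (Or.inl rfl)
    · exact connTo_succ_iff.2 (Or.inr ⟨y, hle.2 hadj, ih y hc⟩)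

lemma connTo_of_walk {H : Gbar.Subgraph} {a b : H.verts} (w : H.coe.Walk a b) :
    ConnTo H (b : V) w.length (a : V) := by
  induction w with
  | nil => rfl
  | @cons u v w h p ih => exact connTo_succ_iff.2 (Or.inr ⟨v, h, ih⟩)

/-- A connected locally finite graph has countably many vertices. -/
lemma countable_of_locallyFinite (hlf : Gbar.LocallyFinite) (hconn : Gbar.Connected) :
    Countable V := by
  classical
  obtain ⟨o⟩ : Nonempty V := hconn.nonempty
  set T : ℕ → Set V := fun n => {x | ∃ w : Gbar.Walk x o, w.length ≤ n} with hT_def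
  have hT : ∀ n, (T n).Finite := by
    intro n
    induction n with
    | zero =>
      refine Set.Finite.subset (Set.finite_singleton o) ?_
      rintro x ⟨w, hw⟩
      have hxo : x = o := SimpleGraph.Walk.eq_of_length_eq_zero (Nat.le_zero.mp hw)
      simp [hxo]
    | succ n ih =>
      have hnb : ∀ y : V, (Gbar.neighborSet y).Finite := by
        intro y
        haveI := hlf y
        exact (Gbar.neighborSet y).toFinite
      refine Set.Finite.subset ((Set.Finite.biUnion ih fun y _ => hnb y).insert o) ?_
      rintro x ⟨w, hw⟩
      cases w with
      | nil => exact Set.mem_insert _ _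
      | @cons _ y _ h p =>
        refine Set.mem_insert_iff.2 (Or.inr ?_)
        exact Set.mem_biUnion (show y ∈ T n from ⟨p, by simpa using Nat.succ_le_succ_iff.mp hw⟩)
          (show x ∈ Gbar.neighborSet y from h.symm)
  have huniv : (Set.univ : Set V) ⊆ ⋃ n, T n := by
    intro x _
    obtain ⟨w⟩ := hconn.preconnected x o
    exact Set.mem_iUnion.2 ⟨w.length, w, le_rfl⟩
  have : (Set.univ : Set V).Countable :=
    ((Set.countable_iUnion fun n => (hT n).countable).mono huniv)
  exact Set.countable_univ_iff.mp this

variable {o : V} {Ω : Type*} {mΩ : MeasurableSpace Ω} {μ : Measure Ω}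

lemma measurableSet_connTo [Countable V] (W : GrowingSRW Gbar o mΩ μ) (t : ℕ) :
    ∀ (k : ℕ) (x : V), MeasurableSet[W.F t] {ω | ConnTo (W.G t ω) o k x} := by
  intro k
  induction k with
  | zero =>
    intro x
    rcases eq_or_ne x o with h | h
    · simpa [connTo_zero_iff, h] using (@MeasurableSet.univ Ω (W.F t))
    · simpa [connTo_zero_iff, h] using (@MeasurableSet.empty Ω (W.F t))
  | succ k ih =>
    intro x
    have hset : {ω | ConnTo (W.G t ω) o (k+1) x}
        = {ω | x = o} ∪ ⋃ y : V,
            ({ω | (W.G t ω).Adj x y} ∩ {ω | ConnTo (W.G t ω) o k y}) := by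
      ext ω
      simp only [Set.mem_setOf_eq, Set.mem_union, Set.mem_iUnion, Set.mem_inter_iff,
        connTo_succ_iff]
    rw [hset]
    have h1 : MeasurableSet[W.F t] {ω : Ω | x = o} := by
      rcases eq_or_ne x o with h | h
      · simpa [h] using (@MeasurableSet.univ Ω (W.F t))
      · simpa [h] using (@MeasurableSet.empty Ω (W.F t))
    exact h1.union (MeasurableSet.iUnion fun y => (W.G_adj_adapted t x y).inter (ih y))

lemma GrowingSRW.G_mono (W : GrowingSRW Gbar o mΩ μ) (ω : Ω) : Monotone fun t => W.G t ω :=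
  monotone_nat_of_le_succ (W.mono ω)

/-- The key probabilistic step: if `x ≠ o` is visited infinitely often and is connected
to `o` within `k+1` steps in some `G_t`, then (a.s.) some neighbour `y` of `x` is visited
infinitely often and is connected to `o` within `k` steps. -/
lemma GrowingSRW.key [Countable V] [IsProbabilityMeasure μ]
    (W : GrowingSRW Gbar o mΩ μ) (hlf : Gbar.LocallyFinite) (x : V) (hx : x ≠ o) (k : ℕ) :
    ∀ᵐ ω ∂μ, ({t | W.X t ω = x}.Infinite ∧ ∃ t, ConnTo (W.G t ω) o (k+1) x) →
      ∃ y, Gbar.Adj x y ∧ {t | W.X t ω = y}.Infinite ∧ ∃ t, ConnTo (W.G t ω) o k y := by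
  classical
  haveI := hlf x
  set N : Finset V := Gbar.neighborFinset x with hN
  -- the events
  set Bs : ℕ → V → Set Ω := fun t y =>
    ({ω | W.X t ω = x} ∩ {ω | (W.G t ω).Adj x y}) ∩ {ω | ConnTo (W.G t ω) o k y} with hBs_def
  have hBs_meas : ∀ t y, MeasurableSet[W.F t] (Bs t y) := fun t y =>
    ((W.X_adapted t x).inter (W.G_adj_adapted t x y)).inter (measurableSet_connTo W t k y)
  set A : ℕ → Set Ω := fun t => ⋃ y ∈ N, (Bs t y ∩ {ω | W.X (t+1) ω = y}) with hA_def
  have hA_meas : ∀ t, MeasurableSet[W.F (t+1)] (A t) := by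
    intro t
    refine MeasurableSet.biUnion N.countable_toSet fun y _ => ?_
    exact (W.F.mono (Nat.le_succ t) _ (hBs_meas t y)).inter (W.X_adapted (t+1) y)
  set s : ℕ → Set Ω := fun n => Nat.casesOn n ∅ A with hs_def
  have hs : ∀ n, MeasurableSet[W.F n] (s n) := by
    intro n
    cases n with
    | zero => exact (@MeasurableSet.empty Ω (W.F 0))
    | succ t => exact hA_meas t
  set g : ℕ → Ω → ℝ := fun t => μ[(s (t+1)).indicator (1 : Ω → ℝ)|W.F t] with hg_def
  have hBC := MeasureTheory.ae_mem_limsup_atTop_iff (ℱ := W.F) μ hs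
  set D : ℕ := N.card with hD
  set c : ℝ := (D : ℝ)⁻¹ with hc
  -- the one step conditional probability bound
  have hstep : ∀ t (y : V), ∀ᵐ ω ∂μ, ω ∈ Bs t y → c ≤ g t ω := by
    intro t y
    by_cases hyN : y ∈ N
    swap
    · exact Eventually.of_forall fun ω hω =>
        absurd ((Gbar.mem_neighborFinset x y).2 ((W.G t ω).adj_sub hω.1.2)) hyN
    -- y is a neighbour of x
    have hDpos : 0 < D := Finset.card_pos.2 ⟨y, hyN⟩
    have hcpos : 0 < c := by
      rw [hc]
      exact inv_pos.2 (by exact_mod_cast hDpos)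
    set f : Ω → ℝ := fun ω' => if W.X (t+1) ω' = y then (1 : ℝ) else 0 with hf_def
    have hf_eq : f = ({ω | W.X (t+1) ω = y}).indicator (1 : Ω → ℝ) := by
      funext ω
      by_cases h : W.X (t+1) ω = y <;> simp [hf_def, Set.indicator_apply, h]
    have hf_int : Integrable f μ := by
      rw [hf_eq]
      exact (integrable_const 1).indicator (W.F.le (t+1) _ (W.X_adapted (t+1) y))
    have hint1 : Integrable ((Bs t y ∩ {ω | W.X (t+1) ω = y}).indicator (1 : Ω → ℝ)) μ :=
      (integrable_const 1).indicator
        ((W.F.le t _ (hBs_meas t y)).inter (W.F.le (t+1) _ (W.X_adapted (t+1) y)))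
    have hint2 : Integrable ((s (t+1)).indicator (1 : Ω → ℝ)) μ :=
      (integrable_const 1).indicator (W.F.le (t+1) _ (hs (t+1)))
    have hsub : Bs t y ∩ {ω | W.X (t+1) ω = y} ⊆ s (t+1) :=
      Set.subset_biUnion_of_mem (u := fun y => Bs t y ∩ {ω | W.X (t+1) ω = y}) hyN
    have hmono : μ[(Bs t y ∩ {ω | W.X (t+1) ω = y}).indicator (1 : Ω → ℝ)|W.F t]
        ≤ᵐ[μ] g t :=
      condExp_mono hint1 hint2 (Eventually.of_forall fun ω =>
        Set.indicator_le_indicator_of_subset hsub (fun _ => zero_le_one) ω)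
    have heq1 : (Bs t y ∩ {ω | W.X (t+1) ω = y}).indicator (1 : Ω → ℝ)
        = (Bs t y).indicator f := by
      rw [hf_eq, Set.indicator_indicator]
    have heq2 : μ[(Bs t y).indicator f|W.F t] =ᵐ[μ] (Bs t y).indicator (μ[f|W.F t]) :=
      condExp_indicator hf_int (hBs_meas t y)
    have hstep' := W.step t y
    filter_upwards [hmono, heq2, hstep'] with ω h1 h2 h3
    intro hωB
    -- compute the conditional expectation at ω
    have hXt : W.X t ω = x := hωB.1.1
    have hadj : (W.G t ω).Adj x y := hωB.1.2
    have hval : (Bs t y).indicator (μ[f|W.F t]) ω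
        = (((W.G t ω).neighborSet x).ncard : ℝ)⁻¹ := by
      rw [Set.indicator_of_mem hωB, h3, hXt, if_pos hadj]
    have hkey : c ≤ (((W.G t ω).neighborSet x).ncard : ℝ)⁻¹ := by
      have hsub' : (W.G t ω).neighborSet x ⊆ (N : Set V) := by
        intro z hz
        exact (Gbar.mem_neighborFinset x z).2 ((W.G t ω).adj_sub hz)
      have hfin' : ((W.G t ω).neighborSet x).Finite := N.finite_toSet.subset hsub'
      have hle : ((W.G t ω).neighborSet x).ncard ≤ D := by
        have := Set.ncard_le_ncard hsub' N.finite_toSet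
        simpa [Set.ncard_coe_finset] using this
      have hpos : 0 < ((W.G t ω).neighborSet x).ncard :=
        Set.ncard_pos hfin' |>.2 ⟨y, hadj⟩
      rw [hc]
      apply inv_anti₀
      · exact_mod_cast hpos
      · exact_mod_cast hle
    calc c ≤ (((W.G t ω).neighborSet x).ncard : ℝ)⁻¹ := hkey
      _ = (Bs t y).indicator (μ[f|W.F t]) ω := hval.symm
      _ = (μ[(Bs t y).indicator f|W.F t]) ω := h2.symm
      _ = (μ[(Bs t y ∩ {ω | W.X (t+1) ω = y}).indicator (1 : Ω → ℝ)|W.F t]) ω := by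
          rw [heq1]
      _ ≤ g t ω := h1
  have hstep' : ∀ᵐ ω ∂μ, ∀ t (y : V), ω ∈ Bs t y → c ≤ g t ω := by
    rw [ae_all_iff]
    intro t
    rw [ae_all_iff]
    intro y
    exact hstep t y
  have hnonneg : ∀ᵐ ω ∂μ, ∀ t, 0 ≤ g t ω := by
    rw [ae_all_iff]
    intro t
    exact condExp_nonneg (Eventually.of_forall fun ω =>
      Set.indicator_nonneg (fun _ _ => zero_le_one) ω)
  -- no neighbours: vacuous case
  rcases Finset.eq_empty_or_nonempty N with hNe | hNne
  · refine Eventually.of_forall fun ω hω => ?_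
    obtain ⟨hinf, t, hcx⟩ := hω
    rcases connTo_succ_iff.1 hcx with h | ⟨y, hadj, _⟩
    · exact absurd h hx
    · have hyN : y ∈ N := (Gbar.mem_neighborFinset x y).2 ((W.G t ω).adj_sub hadj)
      rw [hNe] at hyN
      exact absurd hyN (Finset.notMem_empty y)
  have hDpos : 0 < D := Finset.card_pos.2 hNne
  have hcpos : 0 < c := by
    rw [hc]; exact inv_pos.2 (by exact_mod_cast hDpos)
  filter_upwards [hBC, hstep', hnonneg] with ω hωBC hωstep hωnn
  rintro ⟨hinf, t₀, hconn0⟩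
  -- infinitely many times in the `B` events
  have hBinf : {t | W.X t ω = x ∧ ConnTo (W.G t ω) o (k+1) x}.Infinite := by
    have hsub : {t | W.X t ω = x} \ {t | t < t₀}
        ⊆ {t | W.X t ω = x ∧ ConnTo (W.G t ω) o (k+1) x} := by
      rintro t ⟨ht, ht'⟩
      refine ⟨ht, ConnTo.mono (W.G_mono ω (not_lt.1 ht')) _ _ hconn0⟩
    exact (hinf.diff (Set.finite_lt_nat t₀)).mono hsub
  have hBsub : ∀ t, W.X t ω = x ∧ ConnTo (W.G t ω) o (k+1) x → ∃ y, ω ∈ Bs t y := by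
    rintro t ⟨hxt, hcx⟩
    rcases connTo_succ_iff.1 hcx with rfl | ⟨y, hadj, hcy⟩
    · exact absurd rfl hx
    · exact ⟨y, ⟨⟨hxt, hadj⟩, hcy⟩⟩
  have hgc : {t | c ≤ g t ω}.Infinite := by
    refine hBinf.mono fun t ht => ?_
    obtain ⟨y, hy⟩ := hBsub t ht
    exact hωstep t y hy
  -- partial sums of the conditional probabilities diverge
  have htend : Filter.Tendsto (fun n => ∑ j ∈ Finset.range n,
      (μ[(s (j+1)).indicator (1 : Ω → ℝ)|W.F j]) ω) Filter.atTop Filter.atTop := by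
    rw [Filter.tendsto_atTop]
    intro b
    obtain ⟨m, hm⟩ := exists_nat_ge (b / c)
    have hbm : b ≤ c * m := by
      rw [← div_le_iff₀' hcpos]
      exact hm
    obtain ⟨T, hTsub, hTcard⟩ := hgc.exists_subset_card_eq m
    refine Filter.eventually_atTop.2 ⟨T.sup id + 1, fun n hn => ?_⟩
    have hTrange : T ⊆ Finset.range n := by
      intro t ht
      exact Finset.mem_range.2 (lt_of_lt_of_le (Nat.lt_succ_of_le (Finset.le_sup (f := id) ht)) hn)
    calc b ≤ c * m := hbm
      _ = ∑ _t ∈ T, c := by rw [Finset.sum_const, hTcard, nsmul_eq_mul, mul_comm]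
      _ ≤ ∑ t ∈ T, g t ω := Finset.sum_le_sum fun t ht => hTsub ht
      _ ≤ ∑ j ∈ Finset.range n, g j ω :=
          Finset.sum_le_sum_of_subset_of_nonneg hTrange fun j _ _ => hωnn j
  -- Borel–Cantelli: the events `A t` occur infinitely often
  have hlim : ω ∈ Filter.limsup s Filter.atTop := hωBC.2 htend
  have hfreq : {n | ω ∈ s n}.Infinite :=
    Nat.frequently_atTop_iff_infinite.1 (Filter.mem_limsup_iff_frequently_mem.1 hlim)
  -- pigeonhole over the finitely many neighbours
  have hcover : {n | ω ∈ s n} ⊆ ⋃ y ∈ (N : Set V),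
      {n | ∃ t, n = t + 1 ∧ ω ∈ Bs t y ∧ W.X n ω = y} := by
    intro n hn
    cases n with
    | zero => exact absurd hn (by simp [hs_def])
    | succ t =>
      obtain ⟨y, hyN, hy⟩ := Set.mem_iUnion₂.1 hn
      exact Set.mem_iUnion₂.2 ⟨y, hyN, t, rfl, hy.1, hy.2⟩
  obtain ⟨y, hyN, hyinf⟩ : ∃ y ∈ (N : Set V),
      {n | ∃ t, n = t + 1 ∧ ω ∈ Bs t y ∧ W.X n ω = y}.Infinite := by
    by_contra hcon
    push_neg at hcon
    exact hfreq ((Set.Finite.biUnion N.finite_toSet fun y hy => hcon y hy).subset hcover)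
  refine ⟨y, (Gbar.mem_neighborFinset x y).1 hyN, ?_, ?_⟩
  · refine hyinf.mono fun n hn => ?_
    obtain ⟨t, _, _, hXn⟩ := hn
    exact hXn
  · obtain ⟨n, t, _, hB, _⟩ := hyinf.nonempty
    exact ⟨t, hB.2⟩

end TransienceProof


/-- For simple random walk on monotone increasing connected growing
graphs `G_t ⊆ Ḡ`, with probability one the site `0` is transient for the sample path
if and only if every vertex of `Ḡ` is transient for this sample path. -/
theorem srw_growing_transient_iff_all_transient
    {V : Type*} (Gbar : SimpleGraph V) (o : V)
    (hlf : Gbar.LocallyFinite) (hconn : Gbar.Connected) (hinf : Infinite V)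
    {Ω : Type*} (mΩ : MeasurableSpace Ω) (μ : Measure Ω) [IsProbabilityMeasure μ]
    (W : GrowingSRW Gbar o mΩ μ) :
    ∀ᵐ ω ∂μ, ({t | W.X t ω = o}.Finite ↔ ∀ x : V, {t | W.X t ω = x}.Finite) := by
  classical
  haveI : Countable V := countable_of_locallyFinite hlf hconn
  have hkey : ∀ᵐ ω ∂μ, ∀ (x : V) (k : ℕ),
      x ≠ o → ({t | W.X t ω = x}.Infinite ∧ ∃ t, ConnTo (W.G t ω) o (k+1) x) →
      ∃ y, Gbar.Adj x y ∧ {t | W.X t ω = y}.Infinite ∧ ∃ t, ConnTo (W.G t ω) o k y := by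
    rw [ae_all_iff]
    intro x
    rw [ae_all_iff]
    intro k
    by_cases hx : x = o
    · exact Filter.Eventually.of_forall fun ω hxo => absurd hx hxo
    · filter_upwards [W.key hlf x hx k] with ω h _ h2
      exact h h2
  filter_upwards [hkey] with ω hω
  have main : ∀ (k : ℕ) (x : V), {t | W.X t ω = x}.Infinite →
      (∃ t, ConnTo (W.G t ω) o k x) → {t | W.X t ω = o}.Infinite := by
    intro k
    induction k with
    | zero =>
      rintro x hxinf ⟨t, hc⟩
      have hxo : x = o := hc
      rwa [hxo] at hxinf
    | succ k ih =>
      rintro x hxinf ⟨t, hc⟩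
      by_cases hxo : x = o
      · rwa [hxo] at hxinf
      · obtain ⟨y, _, hyinf, hyc⟩ := hω x k hxo ⟨hxinf, t, hc⟩
        exact ih y hyinf hyc
  constructor
  · intro hfin x
    by_contra hinf'
    have hxinf : {t | W.X t ω = x}.Infinite := hinf'
    obtain ⟨t, ht⟩ := hxinf.nonempty
    have hxv : x ∈ (W.G t ω).verts := by
      have h' := W.X_mem ω t
      rwa [ht] at h'
    have hov : o ∈ (W.G t ω).verts := by
      have h0 := W.X_mem ω 0
      rw [W.X_zero ω] at h0
      exact (W.G_mono ω (Nat.zero_le t)).1 h0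
    obtain ⟨k, hk⟩ : ∃ k, ConnTo (W.G t ω) o k x := by
      obtain ⟨w⟩ := (W.conn ω t).coe.preconnected ⟨x, hxv⟩ ⟨o, hov⟩
      exact ⟨w.length, connTo_of_walk w⟩
    exact main k x hxinf ⟨t, hk⟩ hfin
  · intro h
    exact h o

end MonotoneWalk
end

section
/- Let X_t be a simple random walk on growing graphs G_t ⊆ Ḡ, and let S = Σ_n p_n where p_n = P(A_n | F_{η_n}) with A_n = {∃ s ∈ [η_n, σ_n): X_s = 0}, σ_n = inf{t ≥ η_n : X_t ∈ ∂G_{η_n}} and η_{n+1} = inf{t ≥ σ_n : X_t ∉ ∂G_t}, η_0 = 0. If the simple random walk on the fixed graph Ḡ is transient, then almost surely on the event {S < ∞}, the sample path of X_t is transient at 0. -/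
open MeasureTheory ProbabilityTheory Filter Set
open scoped ENNReal Classical Pointwise

namespace MonotoneWalk

variable {V : Type*}

section PartABC

variable {V : Type*} {Gbar : SimpleGraph V}

lemma walk_support_injective {G : SimpleGraph V} {u v : V} :
    Function.Injective (fun w : G.Walk u v => w.support) := by
  intro p q h
  simp only at h
  induction p with
  | nil =>
    cases q with
    | nil => rfl
    | cons h2 q' =>
      have := congrArg List.length h
      simp only [SimpleGraph.Walk.length_support] at this
      simp at this
  | cons h1 p' ih =>
    cases q with
    | nil =>
      have := congrArg List.length h
      simp only [SimpleGraph.Walk.length_support] at this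
      simp at this
    | cons h2 q' =>
      rw [SimpleGraph.Walk.support_cons, SimpleGraph.Walk.support_cons,
        p'.support_eq_cons, q'.support_eq_cons] at h
      injection h with _ h
      injection h with hv htail
      subst hv
      have hs : p'.support = q'.support := by
        rw [p'.support_eq_cons, q'.support_eq_cons, htail]
      rw [ih hs]

instance countable_walk [Countable V] {G : SimpleGraph V} {u v : V} :
    Countable (G.Walk u v) :=
  walk_support_injective.countable

lemma countable_of_connected_s3 {G : SimpleGraph V} (hlf : G.LocallyFinite)
    (hconn : G.Connected) : Countable V := by
  obtain ⟨o⟩ := hconn.nonempty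
  let S : ℕ → Set V := fun n => Nat.rec {o} (fun _ s => s ∪ ⋃ x ∈ s, G.neighborSet x) n
  have hfin : ∀ n, (S n).Finite := by
    intro n
    induction n with
    | zero => exact Set.finite_singleton o
    | succ n ih =>
      exact ih.union (ih.biUnion fun x _ => (G.neighborSet x).toFinite)
  have hstep : ∀ {a b : V} (w : G.Walk a b) (n : ℕ), a ∈ S n → b ∈ S (n + w.length) := by
    intro a b w
    induction w with
    | nil => intro n h; simpa using h
    | @cons a c b h1 p ih =>
      intro n ha
      have hc : c ∈ S (n + 1) :=
        Set.mem_union_right _ (Set.mem_biUnion ha h1)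
      have := ih (n + 1) hc
      simpa [Nat.add_assoc, Nat.add_comm 1 p.length] using this
  have hcov : ∀ v : V, ∃ n, v ∈ S n := by
    intro v
    obtain ⟨w⟩ := hconn.preconnected o v
    exact ⟨w.length, by simpa using hstep w 0 (by simp [S])⟩
  have : (Set.univ : Set V).Countable := by
    have h2 : (⋃ n, S n) = Set.univ := by
      ext v; simp only [Set.mem_iUnion, Set.mem_univ, iff_true]; exact hcov v
    rw [← h2]
    exact Set.countable_iUnion fun n => (hfin n).countable
  exact Set.countable_univ_iff.mp this

lemma walkWeight_nil {G : SimpleGraph V} {u : V} :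
    walkWeight G (SimpleGraph.Walk.nil : G.Walk u u) = 1 := by
  simp [walkWeight]

lemma walkWeight_cons {G : SimpleGraph V} {u v w : V} (h : G.Adj u v) (p : G.Walk v w) :
    walkWeight G (p.cons h) = ((G.neighborSet u).ncard : ℝ≥0∞)⁻¹ * walkWeight G p := by
  have hne := p.support_ne_nil
  rw [walkWeight, walkWeight, SimpleGraph.Walk.support_cons,
    List.dropLast_cons_of_ne_nil hne]
  simp

lemma walkWeight_append {G : SimpleGraph V} {u v w : V} (p : G.Walk u v) (q : G.Walk v w) :
    walkWeight G (p.append q) = walkWeight G p * walkWeight G q := by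
  induction p with
  | nil => simp [walkWeight_nil]
  | cons h p' ih =>
    rw [SimpleGraph.Walk.cons_append, walkWeight_cons, walkWeight_cons, ih, mul_assoc]

lemma support_eq_dropLast_concat {G : SimpleGraph V} {u v : V} (p : G.Walk u v) :
    p.support = p.support.dropLast ++ [v] := by
  induction p with
  | nil => simp
  | cons h p' ih =>
    rw [SimpleGraph.Walk.support_cons, List.dropLast_cons_of_ne_nil p'.support_ne_nil]
    rw [List.cons_append, ← ih]

lemma exists_split {G : SimpleGraph V} {o : V} (w : G.Walk o o) (hw : w.length ≠ 0) :
    ∃ (e r : G.Walk o o), e.append r = w ∧ e.length ≠ 0 ∧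
      (∀ x ∈ e.support.tail.dropLast, x ≠ o) ∧ r.length + 1 ≤ w.length := by
  cases w with
  | nil => simp at hw
  | @cons _ y _ h q =>
    have hmem : o ∈ q.support := q.end_mem_support
    set tk := q.takeUntil o hmem with htk
    refine ⟨SimpleGraph.Walk.cons h tk, q.dropUntil o hmem, ?_, by simp, ?_, ?_⟩
    · rw [SimpleGraph.Walk.cons_append, q.take_spec hmem]
    · intro x hx
      rw [SimpleGraph.Walk.support_cons, List.tail_cons] at hx
      have hcount : tk.support.count o = 1 := q.count_support_takeUntil_eq_one hmem
      have hconcat := support_eq_dropLast_concat tk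
      rw [hconcat] at hcount
      rw [List.count_append] at hcount
      simp only [List.count_singleton] at hcount
      have hzero : tk.support.dropLast.count o = 0 := by
        simp at hcount; omega
      intro hxo
      subst hxo
      exact absurd (List.count_eq_zero.mp hzero) (fun hc => hc hx)
    · have hlen := congrArg SimpleGraph.Walk.length (q.take_spec hmem)
      rw [SimpleGraph.Walk.length_append] at hlen
      simp only [SimpleGraph.Walk.length_cons]
      omega

lemma green_le (G : SimpleGraph V) (o : V) (hr : returnProb G o < 1) :
    ∑' w : G.Walk o o, walkWeight G w ≤ (1 - returnProb G o)⁻¹ := by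
  set r := returnProb G o with hrdef
  set C := (1 - r)⁻¹ with hCdef
  have h1 : (1 : ℝ≥0∞) - r ≠ 0 := by
    rw [Ne, tsub_eq_zero_iff_le]
    exact fun hc => absurd hr (not_lt.mpr hc)
  have h2 : (1 : ℝ≥0∞) - r ≠ ⊤ := (tsub_le_self.trans_lt ENNReal.one_lt_top).ne
  have honeC : (1 : ℝ≥0∞) ≤ C := ENNReal.one_le_inv.mpr tsub_le_self
  have hCkey : 1 + r * C = C := by
    calc 1 + r * C = (1 - r) * C + r * C := by rw [ENNReal.mul_inv_cancel h1 h2]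
    _ = ((1 - r) + r) * C := (add_mul _ _ _).symm
    _ = 1 * C := by rw [tsub_add_cancel_of_le hr.le]
    _ = C := one_mul C
  have hgt : ∀ L : ℕ, (∑' w : G.Walk o o, if w.length ≤ L then walkWeight G w else 0) ≤ C := by
    intro L
    induction L with
    | zero =>
      have h0 : (∑' w : G.Walk o o, if w.length ≤ 0 then walkWeight G w else 0) = 1 := by
        rw [tsum_eq_single (SimpleGraph.Walk.nil : G.Walk o o)]
        · simp [walkWeight_nil]
        · intro b hb
          rw [if_neg]
          simp only [Nat.le_zero]
          exact fun hc => hb (SimpleGraph.Walk.nil_iff_eq_nil.mp (SimpleGraph.Walk.length_eq_zero_iff.mp hc))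
      rw [h0]; exact honeC
    | succ L ih =>
      have hsplit : (fun w : G.Walk o o => if w.length ≤ L + 1 then walkWeight G w else 0) =
          (fun w => (if w = SimpleGraph.Walk.nil then walkWeight G w else 0) +
            (if w ≠ SimpleGraph.Walk.nil ∧ w.length ≤ L + 1 then walkWeight G w else 0)) := by
        funext w
        by_cases hw : w = SimpleGraph.Walk.nil
        · subst hw; simp
        · simp [hw]
      rw [hsplit, ENNReal.tsum_add]
      have hnil : (∑' w : G.Walk o o, if w = SimpleGraph.Walk.nil then walkWeight G w else 0)
          = 1 := by
        rw [tsum_eq_single (SimpleGraph.Walk.nil : G.Walk o o)]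
        · simp [walkWeight_nil]
        · intro b hb; exact if_neg hb
      rw [hnil]
      have hbound : (∑' w : G.Walk o o,
          if w ≠ SimpleGraph.Walk.nil ∧ w.length ≤ L + 1 then walkWeight G w else 0)
          ≤ r * (∑' w : G.Walk o o, if w.length ≤ L then walkWeight G w else 0) := by
        set S : Set (G.Walk o o) := {w | w ≠ SimpleGraph.Walk.nil ∧ w.length ≤ L + 1} with hS
        have hsub : (∑' w : G.Walk o o,
            if w ≠ SimpleGraph.Walk.nil ∧ w.length ≤ L + 1 then walkWeight G w else 0)
            = ∑' x : S, walkWeight G x.1 := by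
          rw [tsum_subtype]
          apply tsum_congr
          intro w
          rw [Set.indicator_apply]
          rfl
        rw [hsub]
        have hchoice : ∀ x : S,
            ∃ p : {w : G.Walk o o // w.length ≠ 0 ∧
                    ∀ y ∈ w.support.tail.dropLast, y ≠ o} ×
                  {w : G.Walk o o // w.length ≤ L},
              p.1.1.append p.2.1 = x.1 := by
          rintro ⟨w, hw1, hw2⟩
          have hlen : w.length ≠ 0 := fun hc => hw1 (SimpleGraph.Walk.nil_iff_eq_nil.mp (SimpleGraph.Walk.length_eq_zero_iff.mp hc))
          obtain ⟨e, rw', happ, he1, he2, hlen2⟩ := exists_split w hlen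
          have hlw : (e.append rw').length = w.length := by rw [happ]
          rw [SimpleGraph.Walk.length_append] at hlw
          exact ⟨⟨⟨e, he1, he2⟩, ⟨rw', by omega⟩⟩, happ⟩
        choose Φ hΦ using hchoice
        have hinj : Function.Injective Φ := by
          intro x1 x2 he
          apply Subtype.ext
          rw [← hΦ x1, ← hΦ x2, he]
        calc ∑' x : S, walkWeight G x.1
            = ∑' x : S, walkWeight G (Φ x).1.1 * walkWeight G (Φ x).2.1 := by
              apply tsum_congr
              intro x
              rw [← walkWeight_append, hΦ x]
          _ ≤ ∑' p : {w : G.Walk o o // w.length ≠ 0 ∧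
                    ∀ y ∈ w.support.tail.dropLast, y ≠ o} ×
                  {w : G.Walk o o // w.length ≤ L},
                walkWeight G p.1.1 * walkWeight G p.2.1 :=
              ENNReal.tsum_comp_le_tsum_of_injective hinj _
          _ = r * ∑' y : {w : G.Walk o o // w.length ≤ L}, walkWeight G y.1 := by
              rw [ENNReal.tsum_prod']
              simp_rw [ENNReal.tsum_mul_left]
              rw [ENNReal.tsum_mul_right]
              rfl
          _ = r * (∑' w : G.Walk o o, if w.length ≤ L then walkWeight G w else 0) := by
              congr 1
              have h3 : ∑' y : ({w : G.Walk o o | w.length ≤ L} : Set _), walkWeight G y.1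
                  = ∑' w : G.Walk o o, if w.length ≤ L then walkWeight G w else 0 := by
                rw [tsum_subtype]
                apply tsum_congr
                intro w
                rw [Set.indicator_apply]
                rfl
              exact h3
      calc 1 + (∑' w : G.Walk o o,
            if w ≠ SimpleGraph.Walk.nil ∧ w.length ≤ L + 1 then walkWeight G w else 0)
          ≤ 1 + r * (∑' w : G.Walk o o, if w.length ≤ L then walkWeight G w else 0) :=
            add_le_add le_rfl hbound
        _ ≤ 1 + r * C := add_le_add le_rfl (mul_le_mul_right ih r)
        _ = C := hCkey
  rw [ENNReal.tsum_eq_iSup_sum]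
  apply iSup_le
  intro s
  set L := s.sup (fun w => w.length) with hL
  calc ∑ w ∈ s, walkWeight G w
      = ∑ w ∈ s, (if w.length ≤ L then walkWeight G w else 0) :=
        Finset.sum_congr rfl (fun w hw => (if_pos (Finset.le_sup hw)).symm)
    _ ≤ ∑' w : G.Walk o o, if w.length ≤ L then walkWeight G w else 0 :=
        ENNReal.sum_le_tsum s
    _ ≤ C := hgt L

lemma tsum_length_partition {G : SimpleGraph V} {o : V} :
    ∑' (k : ℕ), ∑' w : {w : G.Walk o o // w.length = k}, walkWeight G w.1
      = ∑' w : G.Walk o o, walkWeight G w := by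
  rw [← ENNReal.tsum_sigma]
  exact (Equiv.sigmaFiberEquiv (fun w : G.Walk o o => w.length)).tsum_eq
    (fun w => walkWeight G w)

lemma walk_of_traj {G : SimpleGraph V} (f : ℕ → V) (k : ℕ)
    (hadj : ∀ i < k, G.Adj (f i) (f (i + 1))) :
    ∃ w : G.Walk (f 0) (f k), w.length = k ∧ ∀ i ≤ k, w.getVert i = f i := by
  induction k with
  | zero =>
    refine ⟨SimpleGraph.Walk.nil, rfl, ?_⟩
    intro i hi
    interval_cases i
    simp
  | succ k ih =>
    obtain ⟨w, hlen, hget⟩ := ih (fun i hi => hadj i (by omega))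
    refine ⟨w.concat (hadj k (by omega)), by rw [SimpleGraph.Walk.length_concat, hlen], ?_⟩
    intro i hi
    rw [SimpleGraph.Walk.concat_eq_append, SimpleGraph.Walk.getVert_append]
    by_cases hik : i < w.length
    · rw [if_pos hik]; exact hget i (by omega)
    · rw [if_neg hik]
      rcases Nat.lt_or_ge i (k + 1) with h' | h'
      · have hik2 : i = k := by omega
        have h0 : i - w.length = 0 := by omega
        rw [h0]
        simp [hik2]
      · have hik2 : i = k + 1 := by omega
        have h1 : i - w.length = 1 := by omega
        rw [h1]
        simp [SimpleGraph.Walk.getVert_cons_succ, hik2]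

end PartABC
section Prob

variable {V : Type*} {Gbar : SimpleGraph V} {o : V} {Ω : Type*} {mΩ : MeasurableSpace Ω}
  {μ : Measure Ω} [IsProbabilityMeasure μ]

/-- The event that the walker has full degree at time `s`. -/
def FDset (W : GrowingSRW Gbar o mΩ μ) (s : ℕ) : Set Ω :=
  {ω | ∀ y, Gbar.Adj (W.X s ω) y → (W.G s ω).Adj (W.X s ω) y}

lemma measurableSet_adjX [Countable V] (W : GrowingSRW Gbar o mΩ μ) (t : ℕ) (v : V) :
    MeasurableSet[W.F t] {ω | (W.G t ω).Adj (W.X t ω) v} := by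
  have h : {ω | (W.G t ω).Adj (W.X t ω) v}
      = ⋃ u, ({ω | W.X t ω = u} ∩ {ω | (W.G t ω).Adj u v}) := by
    ext ω
    simp only [Set.mem_iUnion, Set.mem_inter_iff, Set.mem_setOf_eq]
    constructor
    · intro h; exact ⟨W.X t ω, rfl, h⟩
    · rintro ⟨u, h1, h2⟩; rw [h1]; exact h2
  rw [h]
  exact MeasurableSet.iUnion fun u => (W.X_adapted t u).inter (W.G_adj_adapted t u v)

lemma measurableSet_FD [Countable V] (W : GrowingSRW Gbar o mΩ μ)
    (hlf : Gbar.LocallyFinite) (s : ℕ) :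
    MeasurableSet[W.F s] (FDset W s) := by
  have h : FDset W s = ⋃ u, ({ω | W.X s ω = u} ∩
      ⋂ y ∈ Gbar.neighborSet u, {ω | (W.G s ω).Adj u y}) := by
    ext ω
    simp only [Set.mem_iUnion, Set.mem_inter_iff, Set.mem_setOf_eq, Set.mem_iInter, FDset]
    constructor
    · intro h
      exact ⟨W.X s ω, rfl, fun y hy => h y hy⟩
    · rintro ⟨u, h1, h2⟩ y hy
      rw [h1]
      exact h2 y (h1 ▸ hy)
  rw [h]
  haveI := hlf
  refine MeasurableSet.iUnion fun u => (W.X_adapted s u).inter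
    (MeasurableSet.biInter ((Gbar.neighborSet u).toFinite.countable)
      (fun y _ => W.G_adj_adapted s u y))

lemma meas_step [Countable V] (W : GrowingSRW Gbar o mΩ μ) (t : ℕ) (v : V) {A : Set Ω}
    (hA : MeasurableSet[W.F t] A) {c : ℝ} (hc : 0 ≤ c)
    (hbound : ∀ ω ∈ A, (W.G t ω).Adj (W.X t ω) v →
      ((((W.G t ω).neighborSet (W.X t ω)).ncard : ℝ))⁻¹ ≤ c) :
    μ (A ∩ {ω | W.X (t + 1) ω = v}) ≤ ENNReal.ofReal c * μ A := by
  have hmA : MeasurableSet A := W.F.le t _ hA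
  have hBmeas : MeasurableSet {ω | W.X (t + 1) ω = v} := W.F.le (t + 1) _ (W.X_adapted (t + 1) v)
  set g : Ω → ℝ := fun ω => if W.X (t + 1) ω = v then (1 : ℝ) else 0 with hgdef
  have hgind : g = Set.indicator {ω | W.X (t + 1) ω = v} (fun _ => (1 : ℝ)) := by
    funext ω; rw [Set.indicator_apply]; rfl
  have hgint : Integrable g μ := by
    rw [hgind]; exact (integrable_const (1 : ℝ)).indicator hBmeas
  have h1 : ∫ ω in A, g ω ∂μ = (μ (A ∩ {ω | W.X (t + 1) ω = v})).toReal := by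
    rw [hgind, MeasureTheory.setIntegral_indicator hBmeas]
    simp [Measure.restrict_apply, hmA.inter hBmeas]
    rfl
  have h2 : ∫ ω in A, g ω ∂μ = ∫ ω in A, (μ[g|W.F t]) ω ∂μ :=
    (setIntegral_condExp (W.F.le t) hgint hA).symm
  set R : Ω → ℝ := fun ω => if (W.G t ω).Adj (W.X t ω) v
      then (((W.G t ω).neighborSet (W.X t ω)).ncard : ℝ)⁻¹ else 0 with hRdef
  have h3 : ∫ ω in A, (μ[g|W.F t]) ω ∂μ = ∫ ω in A, R ω ∂μ := by
    apply MeasureTheory.setIntegral_congr_ae hmA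
    filter_upwards [W.step t v] with ω hω _
    exact hω
  have hRint : IntegrableOn R A μ :=
    ((integrable_condExp).congr (W.step t v)).integrableOn
  have h4 : ∫ ω in A, R ω ∂μ ≤ ∫ ω in A, (fun _ => c) ω ∂μ := by
    apply MeasureTheory.setIntegral_mono_on hRint
      (integrableOn_const (measure_lt_top μ A).ne) hmA
    intro ω hω
    by_cases hadj : (W.G t ω).Adj (W.X t ω) v
    · rw [hRdef]; simp only [if_pos hadj]; exact hbound ω hω hadj
    · rw [hRdef]; simp only [if_neg hadj]; exact hc
  have h5 : ∫ ω in A, (fun _ => c) ω ∂μ = (μ A).toReal * c := by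
    simp [Measure.restrict_apply, smul_eq_mul]
    exact Or.inl rfl
  have hfinal : (μ (A ∩ {ω | W.X (t + 1) ω = v})).toReal ≤ c * (μ A).toReal := by
    rw [← h1, h2, h3]
    calc ∫ ω in A, R ω ∂μ ≤ ∫ ω in A, (fun _ => c) ω ∂μ := h4
      _ = (μ A).toReal * c := h5
      _ = c * (μ A).toReal := mul_comm _ _
  calc μ (A ∩ {ω | W.X (t + 1) ω = v})
      = ENNReal.ofReal ((μ (A ∩ {ω | W.X (t + 1) ω = v})).toReal) :=
        (ENNReal.ofReal_toReal (measure_ne_top μ _)).symm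
    _ ≤ ENNReal.ofReal (c * (μ A).toReal) := ENNReal.ofReal_le_ofReal hfinal
    _ = ENNReal.ofReal c * ENNReal.ofReal ((μ A).toReal) := ENNReal.ofReal_mul hc
    _ = ENNReal.ofReal c * μ A := by rw [ENNReal.ofReal_toReal (measure_ne_top μ _)]

lemma ae_adjG [Countable V] (W : GrowingSRW Gbar o mΩ μ) :
    ∀ᵐ ω ∂μ, ∀ t, (W.G t ω).Adj (W.X t ω) (W.X (t + 1) ω) := by
  rw [ae_all_iff]
  intro t
  have hsub : {ω | ¬ (W.G t ω).Adj (W.X t ω) (W.X (t + 1) ω)}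
      ⊆ ⋃ v, ({ω | ¬ (W.G t ω).Adj (W.X t ω) v} ∩ {ω | W.X (t + 1) ω = v}) := by
    intro ω hω
    exact Set.mem_iUnion.mpr ⟨W.X (t + 1) ω, hω, rfl⟩
  rw [ae_iff]
  refine measure_mono_null hsub (measure_iUnion_null fun v => ?_)
  have hA : MeasurableSet[W.F t] {ω | ¬ (W.G t ω).Adj (W.X t ω) v} :=
    (measurableSet_adjX W t v).compl
  have := meas_step W t v hA le_rfl (c := 0) (fun ω hω hadj => absurd hadj hω)
  simpa using this

/-- The cylinder event: the walk follows `w` starting at time `t₁`, with full degree at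
each step. -/
def Cyl (W : GrowingSRW Gbar o mΩ μ) (t₁ : ℕ) {v : V} (w : Gbar.Walk o v) : Set Ω :=
  {ω | (∀ i ≤ w.length, W.X (t₁ + i) ω = w.getVert i) ∧
    ∀ i < w.length, ω ∈ FDset W (t₁ + i)}

lemma measurableSet_Cyl [Countable V] (W : GrowingSRW Gbar o mΩ μ)
    (hlf : Gbar.LocallyFinite) (t₁ : ℕ) {v : V} (w : Gbar.Walk o v) :
    MeasurableSet[W.F (t₁ + w.length)] (Cyl W t₁ w) := by
  have h : Cyl W t₁ w = (⋂ (i : ℕ) (_ : i ≤ w.length), {ω | W.X (t₁ + i) ω = w.getVert i}) ∩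
      ⋂ (i : ℕ) (_ : i < w.length), FDset W (t₁ + i) := by
    ext ω
    simp only [Cyl, Set.mem_inter_iff, Set.mem_iInter, Set.mem_setOf_eq]
  rw [h]
  refine MeasurableSet.inter ?_ ?_
  · exact MeasurableSet.iInter fun i => MeasurableSet.iInter fun hi =>
      (W.F.mono (by omega) _ (W.X_adapted (t₁ + i) (w.getVert i)))
  · exact MeasurableSet.iInter fun i => MeasurableSet.iInter fun hi =>
      (W.F.mono (by omega) _ (measurableSet_FD W hlf (t₁ + i)))

lemma ofReal_nat_inv_le (n : ℕ) :
    ENNReal.ofReal ((n : ℝ))⁻¹ ≤ ((n : ℝ≥0∞))⁻¹ := by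
  rcases Nat.eq_zero_or_pos n with h | h
  · subst h; simp
  · have hpos : (0 : ℝ) < n := by exact_mod_cast h
    rw [ENNReal.ofReal_inv_of_pos hpos, ENNReal.ofReal_natCast]

lemma cyl_bound [Countable V] (W : GrowingSRW Gbar o mΩ μ)
    (hlf : Gbar.LocallyFinite) (t₁ : ℕ) :
    ∀ (n : ℕ) {v : V} (w : Gbar.Walk o v), w.length = n →
      μ (Cyl W t₁ w) ≤ walkWeight Gbar w := by
  intro n
  induction n with
  | zero =>
    intro v w hw
    have hsup : w.support.dropLast = [] := by
      apply List.eq_nil_of_length_eq_zero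
      rw [List.length_dropLast, SimpleGraph.Walk.length_support, hw]
    have hwt : walkWeight Gbar w = 1 := by rw [walkWeight, hsup]; simp
    rw [hwt]
    exact prob_le_one
  | succ n ih =>
    intro v w hw
    cases w with
    | nil => simp at hw
    | @cons _ y _ hadj q =>
      obtain ⟨x, r, h2, hconcat⟩ := SimpleGraph.Walk.exists_cons_eq_concat hadj q
      rw [hconcat]
      have hrlen : r.length = n := by
        have := congrArg SimpleGraph.Walk.length hconcat
        rw [SimpleGraph.Walk.length_concat] at this
        omega
      set A := Cyl W t₁ r ∩ FDset W (t₁ + n) with hAdef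
      have hsub : Cyl W t₁ (r.concat h2) ⊆ A ∩ {ω | W.X (t₁ + n + 1) ω = v} := by
        rintro ω ⟨hpin, hfd⟩
        have hlen' : (r.concat h2).length = n + 1 := by
          rw [SimpleGraph.Walk.length_concat, hrlen]
        refine ⟨⟨⟨?_, ?_⟩, ?_⟩, ?_⟩
        · intro i hi
          have hp := hpin i (by omega)
          rw [SimpleGraph.Walk.concat_eq_append, SimpleGraph.Walk.getVert_append] at hp
          rcases lt_or_eq_of_le hi with hi' | hi'
          · rwa [if_pos (hrlen ▸ hi')] at hp
          · subst hi'
            rw [if_neg (by omega), hrlen] at hp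
            simp only [Nat.sub_self] at hp
            rw [SimpleGraph.Walk.getVert_zero] at hp
            rw [hrlen, hp]
            rw [← hrlen]
            exact (SimpleGraph.Walk.getVert_length r).symm
        · intro i hi
          exact hfd i (by omega)
        · exact hfd n (by omega)
        · have hp := hpin (n + 1) (by omega)
          rw [show (r.concat h2).getVert (n + 1) = v by
            rw [← hlen']; exact SimpleGraph.Walk.getVert_length _] at hp
          exact hp
      have hAmeas : MeasurableSet[W.F (t₁ + n)] A := by
        refine MeasurableSet.inter ?_ (measurableSet_FD W hlf (t₁ + n))
        have := measurableSet_Cyl W hlf t₁ r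
        rwa [hrlen] at this
      set c : ℝ := (((Gbar.neighborSet x).ncard : ℝ))⁻¹ with hcdef
      have hc : 0 ≤ c := by positivity
      have hbound : ∀ ω ∈ A, (W.G (t₁ + n) ω).Adj (W.X (t₁ + n) ω) v →
          ((((W.G (t₁ + n) ω).neighborSet (W.X (t₁ + n) ω)).ncard : ℝ))⁻¹ ≤ c := by
        rintro ω ⟨⟨hpin, _⟩, hFD⟩ _
        have hXn : W.X (t₁ + n) ω = x := by
          have := hpin n (le_of_eq hrlen.symm)
          rwa [show r.getVert n = x by rw [← hrlen]; exact SimpleGraph.Walk.getVert_length r]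
            at this
        have hsets : (W.G (t₁ + n) ω).neighborSet (W.X (t₁ + n) ω)
            = Gbar.neighborSet (W.X (t₁ + n) ω) := by
          apply Set.Subset.antisymm
          · intro z hz
            exact (W.G (t₁ + n) ω).adj_sub hz
          · intro z hz
            exact hFD z hz
        rw [hsets, hXn]
      have hstep := meas_step W (t₁ + n) v hAmeas hc hbound
      have hchain : μ (Cyl W t₁ (r.concat h2)) ≤ ENNReal.ofReal c * μ (Cyl W t₁ r) :=
        calc μ (Cyl W t₁ (r.concat h2)) ≤ μ (A ∩ {ω | W.X (t₁ + n + 1) ω = v}) :=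
              measure_mono hsub
          _ ≤ ENNReal.ofReal c * μ A := hstep
          _ ≤ ENNReal.ofReal c * μ (Cyl W t₁ r) :=
              mul_le_mul_right (measure_mono Set.inter_subset_left) _
      have hwt : walkWeight Gbar (r.concat h2)
          = walkWeight Gbar r * ((Gbar.neighborSet x).ncard : ℝ≥0∞)⁻¹ := by
        rw [SimpleGraph.Walk.concat_eq_append, walkWeight_append, walkWeight_cons,
          walkWeight_nil, mul_one]
      calc μ (Cyl W t₁ (r.concat h2)) ≤ ENNReal.ofReal c * μ (Cyl W t₁ r) := hchain
        _ ≤ ((Gbar.neighborSet x).ncard : ℝ≥0∞)⁻¹ * walkWeight Gbar r :=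
            mul_le_mul' (ofReal_nat_inv_le _) (ih r hrlen)
        _ = walkWeight Gbar (r.concat h2) := by rw [hwt, mul_comm]

end Prob
section Bad

variable {V : Type*} {Gbar : SimpleGraph V} {o : V} {Ω : Type*} {mΩ : MeasurableSpace Ω}
  {μ : Measure Ω} [IsProbabilityMeasure μ]

lemma measurableSet_adjGbar [Countable V] (W : GrowingSRW Gbar o mΩ μ) (s : ℕ) :
    MeasurableSet {ω | Gbar.Adj (W.X s ω) (W.X (s + 1) ω)} := by
  have h : {ω | Gbar.Adj (W.X s ω) (W.X (s + 1) ω)}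
      = ⋃ (u) (z) (_ : Gbar.Adj u z), ({ω | W.X s ω = u} ∩ {ω | W.X (s + 1) ω = z}) := by
    ext ω
    simp only [Set.mem_iUnion, Set.mem_inter_iff, Set.mem_setOf_eq]
    constructor
    · intro h; exact ⟨W.X s ω, W.X (s + 1) ω, h, rfl, rfl⟩
    · rintro ⟨u, z, h1, h2, h3⟩; rw [h2, h3]; exact h1
  rw [h]
  exact MeasurableSet.iUnion fun u => MeasurableSet.iUnion fun z =>
    MeasurableSet.iUnion fun _ =>
      (W.F.le s _ (W.X_adapted s u)).inter (W.F.le (s + 1) _ (W.X_adapted (s + 1) z))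

lemma bad_null [Countable V] (W : GrowingSRW Gbar o mΩ μ)
    (hlf : Gbar.LocallyFinite) (htrans : returnProb Gbar o < 1) (t₁ : ℕ) :
    μ {ω | W.X t₁ ω = o ∧ (∀ s, t₁ ≤ s → ω ∈ FDset W s) ∧ {t | W.X t ω = o}.Infinite ∧
        ∀ t, (W.G t ω).Adj (W.X t ω) (W.X (t + 1) ω)} = 0 := by
  set D : ℕ → Set Ω := fun k => {ω | W.X t₁ ω = o ∧ W.X (t₁ + k) ω = o ∧
    (∀ i < k, ω ∈ FDset W (t₁ + i)) ∧
    ∀ i < k, Gbar.Adj (W.X (t₁ + i) ω) (W.X (t₁ + i + 1) ω)} with hDdef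
  have hDmeas : ∀ k, MeasurableSet (D k) := by
    intro k
    have h : D k = {ω | W.X t₁ ω = o} ∩ {ω | W.X (t₁ + k) ω = o} ∩
        (⋂ (i : ℕ) (_ : i < k), FDset W (t₁ + i)) ∩
        ⋂ (i : ℕ) (_ : i < k), {ω | Gbar.Adj (W.X (t₁ + i) ω) (W.X (t₁ + i + 1) ω)} := by
      ext ω
      simp only [hDdef, Set.mem_inter_iff, Set.mem_iInter, Set.mem_setOf_eq]
      tauto
    rw [h]
    refine (((W.F.le t₁ _ (W.X_adapted t₁ o)).inter
      (W.F.le (t₁ + k) _ (W.X_adapted (t₁ + k) o))).inter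
      (MeasurableSet.iInter fun i => MeasurableSet.iInter fun _ =>
        W.F.le (t₁ + i) _ (measurableSet_FD W hlf (t₁ + i)))).inter
      (MeasurableSet.iInter fun i => MeasurableSet.iInter fun _ =>
        measurableSet_adjGbar W (t₁ + i))
  have hDcover : ∀ k, D k ⊆ ⋃ (w : {w : Gbar.Walk o o // w.length = k}), Cyl W t₁ w.1 := by
    intro k ω hω
    obtain ⟨h1, h2, h3, h4⟩ := hω
    obtain ⟨w', hwlen, hwget⟩ := walk_of_traj (G := Gbar) (fun i => W.X (t₁ + i) ω) k
      (fun i hi => h4 i hi)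
    set w : Gbar.Walk o o := w'.copy h1 h2 with hwdef
    refine Set.mem_iUnion.mpr ⟨⟨w, by rw [hwdef, SimpleGraph.Walk.length_copy, hwlen]⟩, ?_⟩
    show ω ∈ Cyl W t₁ w
    constructor
    · intro i hi
      rw [hwdef, SimpleGraph.Walk.getVert_copy]
      rw [hwdef, SimpleGraph.Walk.length_copy, hwlen] at hi
      exact (hwget i hi).symm
    · intro i hi
      rw [hwdef, SimpleGraph.Walk.length_copy, hwlen] at hi
      exact h3 i hi
  have hDbound : ∀ k, μ (D k)
      ≤ ∑' w : {w : Gbar.Walk o o // w.length = k}, walkWeight Gbar w.1 := by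
    intro k
    calc μ (D k) ≤ μ (⋃ (w : {w : Gbar.Walk o o // w.length = k}), Cyl W t₁ w.1) :=
          measure_mono (hDcover k)
      _ ≤ ∑' w : {w : Gbar.Walk o o // w.length = k}, μ (Cyl W t₁ w.1) := measure_iUnion_le _
      _ ≤ ∑' w : {w : Gbar.Walk o o // w.length = k}, walkWeight Gbar w.1 :=
          ENNReal.tsum_le_tsum fun w => cyl_bound W hlf t₁ k w.1 w.2
  have htotal : ∑' k, μ (D k) < ⊤ := by
    calc ∑' k, μ (D k)
        ≤ ∑' (k : ℕ), ∑' w : {w : Gbar.Walk o o // w.length = k}, walkWeight Gbar w.1 :=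
          ENNReal.tsum_le_tsum hDbound
      _ = ∑' w : Gbar.Walk o o, walkWeight Gbar w := tsum_length_partition
      _ ≤ (1 - returnProb Gbar o)⁻¹ := green_le Gbar o htrans
      _ < ⊤ := by
          rw [ENNReal.inv_lt_top]
          rw [tsub_pos_iff_lt]
          exact htrans
  set F : Ω → ℝ≥0∞ := fun ω => ∑' k, (D k).indicator (fun _ => (1 : ℝ≥0∞)) ω with hFdef
  have hFmeas : Measurable F :=
    Measurable.ennreal_tsum fun k => measurable_const.indicator (hDmeas k)
  have hFint : ∫⁻ ω, F ω ∂μ < ⊤ := by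
    rw [hFdef]
    have : ∫⁻ ω, ∑' k, (D k).indicator (fun _ => (1 : ℝ≥0∞)) ω ∂μ
        = ∑' k, ∫⁻ ω, (D k).indicator (fun _ => (1 : ℝ≥0∞)) ω ∂μ :=
      lintegral_tsum fun k => (measurable_const.indicator (hDmeas k)).aemeasurable
    rw [this]
    have heq : ∀ k, ∫⁻ ω, (D k).indicator (fun _ => (1 : ℝ≥0∞)) ω ∂μ = μ (D k) := by
      intro k
      rw [lintegral_indicator_const (hDmeas k), one_mul]
    calc ∑' k, ∫⁻ ω, (D k).indicator (fun _ => (1 : ℝ≥0∞)) ω ∂μ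
        = ∑' k, μ (D k) := by exact tsum_congr heq
      _ < ⊤ := htotal
  have hae := MeasureTheory.ae_lt_top hFmeas hFint.ne
  rw [ae_iff] at hae
  refine measure_mono_null ?_ hae
  rintro ω ⟨h1, h2, h3, h4⟩
  simp only [Set.mem_setOf_eq, not_lt, top_le_iff]
  have hKinf : ((fun t => t - t₁) '' {t | t₁ ≤ t ∧ W.X t ω = o}).Infinite := by
    have hsetinf : {t | t₁ ≤ t ∧ W.X t ω = o}.Infinite := by
      have : {t | W.X t ω = o} \ (Set.Iio t₁) ⊆ {t | t₁ ≤ t ∧ W.X t ω = o} := by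
        intro t ht
        exact ⟨not_lt.mp ht.2, ht.1⟩
      exact Set.Infinite.mono this (Set.Infinite.diff h3 (Set.finite_Iio t₁))
    exact Set.Infinite.image (fun a ha b hb hab => by
      simp only [Set.mem_setOf_eq] at ha hb
      omega) hsetinf
  have hKD : ∀ k ∈ (fun t => t - t₁) '' {t | t₁ ≤ t ∧ W.X t ω = o}, ω ∈ D k := by
    rintro k ⟨t, ⟨ht1, ht2⟩, rfl⟩
    refine ⟨h1, ?_, fun i _ => h2 (t₁ + i) (by omega), fun i _ => ?_⟩
    · rw [Nat.add_sub_cancel' ht1]; exact ht2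
    · exact (W.G (t₁ + i) ω).adj_sub (h4 (t₁ + i))
  by_contra hne
  obtain ⟨n, hn⟩ := ENNReal.exists_nat_gt hne
  obtain ⟨fs, hfs, hcard⟩ := hKinf.exists_subset_card_eq n
  have hsum : (n : ℝ≥0∞) ≤ F ω := by
    have heach : ∀ k ∈ fs, (D k).indicator (fun _ => (1 : ℝ≥0∞)) ω = 1 := by
      intro k hk
      rw [Set.indicator_of_mem (hKD k (hfs hk))]
    calc (n : ℝ≥0∞) = ∑ k ∈ fs, (D k).indicator (fun _ => (1 : ℝ≥0∞)) ω := by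
          rw [Finset.sum_congr rfl heach]
          simp [hcard]
      _ ≤ F ω := ENNReal.sum_le_tsum fs
  exact absurd (lt_of_le_of_lt hsum hn) (lt_irrefl _)

end Bad
section FT

lemma sInf_image_eq_top {P : ℕ → Prop} :
    sInf ((fun s : ℕ => (s : ℕ∞)) '' {s | P s}) = ⊤ ↔ ∀ s, ¬ P s := by
  constructor
  · intro h s hs
    have hmem : ((s : ℕ∞)) ∈ (fun s : ℕ => (s : ℕ∞)) '' {s | P s} :=
      Set.mem_image_of_mem _ hs
    have hle := sInf_le hmem
    rw [h, top_le_iff] at hle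
    exact absurd hle (by simp)
  · intro h
    have he : {s : ℕ | P s} = ∅ := by ext s; simp [h s]
    rw [he, Set.image_empty, sInf_empty]

lemma sInf_image_eq_coe {P : ℕ → Prop} (hne : ∃ s, P s) :
    sInf ((fun s : ℕ => (s : ℕ∞)) '' {s | P s}) = ((sInf {s | P s} : ℕ) : ℕ∞) := by
  apply le_antisymm
  · exact sInf_le (Set.mem_image_of_mem _ (Nat.sInf_mem hne))
  · apply le_sInf
    rintro a ⟨s, hs, rfl⟩
    exact Nat.cast_le.mpr (Nat.sInf_le hs)

lemma sInf_image_le_iff {P : ℕ → Prop} {m : ℕ} :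
    sInf ((fun s : ℕ => (s : ℕ∞)) '' {s | P s}) ≤ (m : ℕ∞) ↔ ∃ s, s ≤ m ∧ P s := by
  constructor
  · intro h
    by_cases hne : ∃ s, P s
    · rw [sInf_image_eq_coe hne] at h
      exact ⟨sInf {s | P s}, Nat.cast_le.mp h, Nat.sInf_mem hne⟩
    · rw [sInf_image_eq_top.mpr (fun s hs => hne ⟨s, hs⟩), top_le_iff] at h
      exact absurd h.symm (by simp)
  · rintro ⟨s, hsm, hs⟩
    exact le_trans (sInf_le (Set.mem_image_of_mem _ hs)) (Nat.cast_le.mpr hsm)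

lemma sInf_image_attained {P : ℕ → Prop} {j : ℕ}
    (h : sInf ((fun s : ℕ => (s : ℕ∞)) '' {s | P s}) = (j : ℕ∞)) :
    P j ∧ ∀ i < j, ¬ P i := by
  have hne : ∃ s, P s := by
    by_contra hc
    rw [sInf_image_eq_top.mpr (fun s hs => hc ⟨s, hs⟩)] at h
    exact absurd h.symm (by simp)
  rw [sInf_image_eq_coe hne] at h
  have hj : j = sInf {s | P s} := (Nat.cast_injective h).symm
  subst hj
  exact ⟨Nat.sInf_mem hne, fun i hi => Nat.notMem_of_lt_sInf hi⟩

lemma le_sInf_image {P : ℕ → Prop} {m : ℕ∞} (h : ∀ s : ℕ, P s → m ≤ (s : ℕ∞)) :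
    m ≤ sInf ((fun s : ℕ => (s : ℕ∞)) '' {s | P s}) := by
  apply le_sInf
  rintro a ⟨s, hs, rfl⟩
  exact h s hs

end FT

section Stopping

variable {V : Type*} {Gbar : SimpleGraph V} {o : V} {Ω : Type*} {mΩ : MeasurableSpace Ω}
  {μ : Measure Ω} [IsProbabilityMeasure μ]

lemma sigma_eq (W : GrowingSRW Gbar o mΩ μ) (n : ℕ) (ω : Ω) :
    W.sigma n ω = W.sigmaOf ω (W.eta n ω) := by
  cases n with
  | zero => rfl
  | succ n => rfl

lemma eta_zero_eq (W : GrowingSRW Gbar o mΩ μ) (ω : Ω) : W.eta 0 ω = 0 := rfl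

lemma eta_succ_eq (W : GrowingSRW Gbar o mΩ μ) (n : ℕ) (ω : Ω) :
    W.eta (n + 1) ω = W.nextEta ω (W.sigma n ω) := rfl

lemma eta_le_sigma (W : GrowingSRW Gbar o mΩ μ) (n : ℕ) (ω : Ω) :
    W.eta n ω ≤ W.sigma n ω := by
  rw [sigma_eq]
  exact le_sInf_image (fun s hs => hs.1)

lemma sigma_le_eta_succ (W : GrowingSRW Gbar o mΩ μ) (n : ℕ) (ω : Ω) :
    W.sigma n ω ≤ W.eta (n + 1) ω := by
  rw [eta_succ_eq]
  exact le_sInf_image (fun s hs => hs.1)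

lemma eta_mono (W : GrowingSRW Gbar o mΩ μ) (ω : Ω) : Monotone (fun n => W.eta n ω) :=
  monotone_nat_of_le_succ fun n => (eta_le_sigma W n ω).trans (sigma_le_eta_succ W n ω)

lemma G_le_of_le (W : GrowingSRW Gbar o mΩ μ) (ω : Ω) {t t' : ℕ} (h : t ≤ t') :
    W.G t ω ≤ W.G t' ω := by
  induction t', h using Nat.le_induction with
  | base => exact le_rfl
  | succ t' ht' ih => exact ih.trans (W.mono ω t')

lemma o_not_bdry (W : GrowingSRW Gbar o mΩ μ) (ω : Ω) (t : ℕ) :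
    o ∉ Boundary Gbar (W.G t ω) := by
  rintro ⟨hv, hlt⟩
  have hsub : Gbar.neighborSet o ⊆ (W.G t ω).neighborSet o := fun y hy =>
    (G_le_of_le W ω (Nat.zero_le t)).2 (W.ball_sub ω y hy)
  have hsub2 : (W.G t ω).neighborSet o ⊆ Gbar.neighborSet o := fun y hy =>
    (W.G t ω).adj_sub hy
  rw [Set.Subset.antisymm hsub2 hsub] at hlt
  exact lt_irrefl _ hlt

lemma measurableSet_bdry [Countable V] (W : GrowingSRW Gbar o mΩ μ)
    (hlf : Gbar.LocallyFinite) (t : ℕ) (v : V) :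
    MeasurableSet[W.F t] {ω | v ∈ Boundary Gbar (W.G t ω)} := by
  have h : {ω | v ∈ Boundary Gbar (W.G t ω)} = {ω | v ∈ (W.G t ω).verts} ∩
      ⋃ y ∈ Gbar.neighborSet v, {ω | ¬ (W.G t ω).Adj v y} := by
    ext ω
    simp only [Boundary, Set.mem_inter_iff, Set.mem_setOf_eq, Set.mem_iUnion]
    constructor
    · rintro ⟨h1, h2⟩
      refine ⟨h1, ?_⟩
      by_contra hc
      push_neg at hc
      have heq : (W.G t ω).neighborSet v = Gbar.neighborSet v :=
        Set.Subset.antisymm (fun y hy => (W.G t ω).adj_sub hy) (fun y hy => hc y hy)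
      rw [heq] at h2
      exact lt_irrefl _ h2
    · rintro ⟨h1, y, hy, hne⟩
      refine ⟨h1, ?_⟩
      apply Set.ncard_lt_ncard
      · constructor
        · exact fun z hz => (W.G t ω).adj_sub hz
        · intro hc
          exact hne (hc hy)
      · exact (Gbar.neighborSet v).toFinite
  rw [h]
  exact (W.G_verts_adapted t v).inter
    (MeasurableSet.biUnion ((Gbar.neighborSet v).toFinite.countable)
      (fun y _ => (W.G_adj_adapted t v y).compl))

lemma measurableSet_XinBdry [Countable V] (W : GrowingSRW Gbar o mΩ μ)
    (hlf : Gbar.LocallyFinite) {j s m : ℕ} (hj : j ≤ m) (hs : s ≤ m) :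
    MeasurableSet[W.F m] {ω | W.X s ω ∈ Boundary Gbar (W.G j ω)} := by
  have h : {ω | W.X s ω ∈ Boundary Gbar (W.G j ω)}
      = ⋃ v, ({ω | W.X s ω = v} ∩ {ω | v ∈ Boundary Gbar (W.G j ω)}) := by
    ext ω
    simp only [Set.mem_iUnion, Set.mem_inter_iff, Set.mem_setOf_eq]
    constructor
    · intro h; exact ⟨W.X s ω, rfl, h⟩
    · rintro ⟨v, h1, h2⟩; rw [h1]; exact h2
  rw [h]
  exact MeasurableSet.iUnion fun v =>
    ((W.F.mono hs) _ (W.X_adapted s v)).inter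
    ((W.F.mono hj) _ (measurableSet_bdry W hlf j v))

lemma measurableSet_eq_of_le {F : Filtration ℕ mΩ} {τ : Ω → ℕ∞}
    (hτ : ∀ m : ℕ, MeasurableSet[F m] {ω | τ ω ≤ (m : ℕ∞)}) (j : ℕ) :
    MeasurableSet[F j] {ω | τ ω = (j : ℕ∞)} := by
  cases j with
  | zero =>
    have h : {ω | τ ω = ((0 : ℕ) : ℕ∞)} = {ω | τ ω ≤ ((0 : ℕ) : ℕ∞)} := by
      ext ω
      simp only [Set.mem_setOf_eq, Nat.cast_zero]
      exact ⟨fun h => h.le, fun h => le_antisymm h zero_le⟩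
    rw [h]; exact hτ 0
  | succ j =>
    have h : {ω | τ ω = ((j + 1 : ℕ) : ℕ∞)}
        = {ω | τ ω ≤ ((j + 1 : ℕ) : ℕ∞)} \ {ω | τ ω ≤ (j : ℕ∞)} := by
      ext ω
      simp only [Set.mem_setOf_eq, Set.mem_diff]
      constructor
      · intro h
        rw [h]
        constructor
        · exact le_rfl
        · intro hc
          have := Nat.cast_le.mp hc
          omega
      · rintro ⟨h1, h2⟩
        rcases eq_or_lt_of_le h1 with h3 | h3
        · exact h3
        · exfalso
          apply h2
          have : τ ω < ((j : ℕ) : ℕ∞) + 1 := by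
            rw [show ((j : ℕ) : ℕ∞) + 1 = ((j + 1 : ℕ) : ℕ∞) by push_cast; ring]
            exact h3
          exact Order.le_of_lt_add_one this
    rw [h]
    exact (hτ (j + 1)).diff ((F.mono (by omega)) _ (hτ j))

lemma stopping_eta_sigma [Countable V] (W : GrowingSRW Gbar o mΩ μ)
    (hlf : Gbar.LocallyFinite) : ∀ n : ℕ,
    (∀ m : ℕ, MeasurableSet[W.F m] {ω | W.eta n ω ≤ (m : ℕ∞)}) ∧
    (∀ m : ℕ, MeasurableSet[W.F m] {ω | W.sigma n ω ≤ (m : ℕ∞)}) := by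
  have hsigma : ∀ n : ℕ,
      (∀ m : ℕ, MeasurableSet[W.F m] {ω | W.eta n ω ≤ (m : ℕ∞)}) →
      (∀ m : ℕ, MeasurableSet[W.F m] {ω | W.sigma n ω ≤ (m : ℕ∞)}) := by
    intro n hη m
    have h : {ω | W.sigma n ω ≤ (m : ℕ∞)}
        = ⋃ (j : ℕ) (_ : j ≤ m) (s : ℕ) (_ : j ≤ s) (_ : s ≤ m),
          ({ω | W.eta n ω = (j : ℕ∞)} ∩ {ω | W.X s ω ∈ Boundary Gbar (W.G j ω)}) := by
      ext ω
      simp only [Set.mem_iUnion, Set.mem_inter_iff, Set.mem_setOf_eq]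
      constructor
      · intro h
        rw [sigma_eq, GrowingSRW.sigmaOf, sInf_image_le_iff] at h
        obtain ⟨s, hsm, hs1, hs2⟩ := h
        have hηfin : W.eta n ω ≤ (s : ℕ∞) := hs1
        set j := (W.eta n ω).toNat with hjdef
        have hηj : W.eta n ω = (j : ℕ∞) := by
          rw [hjdef]
          exact (ENat.coe_toNat (fun hc => by rw [hc] at hηfin; simp at hηfin)).symm
        refine ⟨j, ?_, s, ?_, hsm, hηj, ?_⟩
        · have := hηj ▸ hηfin
          exact le_trans (Nat.cast_le.mp this) hsm
        · exact Nat.cast_le.mp (hηj ▸ hηfin)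
        · exact hs2
      · rintro ⟨j, hjm, s, hjs, hsm, h1, h2⟩
        rw [sigma_eq, GrowingSRW.sigmaOf, sInf_image_le_iff]
        refine ⟨s, hsm, ?_, ?_⟩
        · rw [h1]; exact Nat.cast_le.mpr hjs
        · rwa [h1, ENat.toNat_coe]
    rw [h]
    refine MeasurableSet.iUnion fun j => MeasurableSet.iUnion fun hjm =>
      MeasurableSet.iUnion fun s => MeasurableSet.iUnion fun hjs =>
      MeasurableSet.iUnion fun hsm => ?_
    exact ((W.F.mono hjm) _ (measurableSet_eq_of_le hη j)).inter
      (measurableSet_XinBdry W hlf hjm hsm)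
  intro n
  induction n with
  | zero =>
    have hη : ∀ m : ℕ, MeasurableSet[W.F m] {ω | W.eta 0 ω ≤ (m : ℕ∞)} := by
      intro m
      have h : {ω | W.eta 0 ω ≤ (m : ℕ∞)} = Set.univ := by
        ext ω
        simp only [Set.mem_setOf_eq, Set.mem_univ, iff_true, eta_zero_eq]
        exact zero_le
      rw [h]
      exact MeasurableSet.univ
    exact ⟨hη, hsigma 0 hη⟩
  | succ n ih =>
    have hη : ∀ m : ℕ, MeasurableSet[W.F m] {ω | W.eta (n + 1) ω ≤ (m : ℕ∞)} := by
      intro m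
      have h : {ω | W.eta (n + 1) ω ≤ (m : ℕ∞)}
          = ⋃ (k : ℕ) (_ : k ≤ m) (s : ℕ) (_ : k ≤ s) (_ : s ≤ m),
            ({ω | W.sigma n ω = (k : ℕ∞)} ∩
              {ω | W.X s ω ∈ Boundary Gbar (W.G s ω)}ᶜ) := by
        ext ω
        simp only [Set.mem_iUnion, Set.mem_inter_iff, Set.mem_setOf_eq, Set.mem_compl_iff]
        constructor
        · intro h
          rw [eta_succ_eq, GrowingSRW.nextEta, sInf_image_le_iff] at h
          obtain ⟨s, hsm, hs1, hs2⟩ := h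
          set k := (W.sigma n ω).toNat with hkdef
          have hσk : W.sigma n ω = (k : ℕ∞) := by
            rw [hkdef]
            exact (ENat.coe_toNat (fun hc => by rw [hc] at hs1; simp at hs1)).symm
          refine ⟨k, ?_, s, ?_, hsm, hσk, hs2⟩
          · exact le_trans (Nat.cast_le.mp (hσk ▸ hs1)) hsm
          · exact Nat.cast_le.mp (hσk ▸ hs1)
        · rintro ⟨k, hkm, s, hks, hsm, h1, h2⟩
          rw [eta_succ_eq, GrowingSRW.nextEta, sInf_image_le_iff]
          refine ⟨s, hsm, ?_, h2⟩
          rw [h1]; exact Nat.cast_le.mpr hks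
      rw [h]
      refine MeasurableSet.iUnion fun k => MeasurableSet.iUnion fun hkm =>
        MeasurableSet.iUnion fun s => MeasurableSet.iUnion fun hks =>
        MeasurableSet.iUnion fun hsm => ?_
      exact ((W.F.mono hkm) _ (measurableSet_eq_of_le ih.2 k)).inter
        (measurableSet_XinBdry W hlf hsm hsm).compl
    exact ⟨hη, hsigma (n + 1) hη⟩

end Stopping
section Levy

variable {V : Type*} {Gbar : SimpleGraph V} {o : V} {Ω : Type*} {mΩ : MeasurableSpace Ω}
  {μ : Measure Ω} [IsProbabilityMeasure μ]

lemma eventA_measurable_stopped [Countable V] (W : GrowingSRW Gbar o mΩ μ)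
    (hlf : Gbar.LocallyFinite) (n : ℕ) :
    MeasurableSet[stoppedSigma W.F (W.eta (n + 1))] (W.eventA n) := by
  apply MeasurableSpace.measurableSet_generateFrom
  constructor
  · have h : W.eventA n = ⋃ s : ℕ, ({ω | W.eta n ω ≤ (s : ℕ∞)} ∩
        {ω | W.sigma n ω ≤ (s : ℕ∞)}ᶜ ∩ {ω | W.X s ω = o}) := by
      ext ω
      simp only [GrowingSRW.eventA, Set.mem_iUnion, Set.mem_inter_iff, Set.mem_setOf_eq,
        Set.mem_compl_iff]
      constructor
      · rintro ⟨s, h1, h2, h3⟩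
        exact ⟨s, ⟨h1, not_le.mpr h2⟩, h3⟩
      · rintro ⟨s, ⟨h1, h2⟩, h3⟩
        exact ⟨s, h1, not_le.mp h2, h3⟩
    rw [h]
    exact MeasurableSet.iUnion fun s =>
      (((W.F.le s _ ((stopping_eta_sigma W hlf n).1 s)).inter
        (W.F.le s _ ((stopping_eta_sigma W hlf n).2 s)).compl)).inter
        (W.F.le s _ (W.X_adapted s o))
  · intro m
    have h : W.eventA n ∩ {ω | W.eta (n + 1) ω ≤ (m : ℕ∞)}
        = ⋃ (s : ℕ) (_ : s < m), (({ω | W.eta n ω ≤ (s : ℕ∞)} ∩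
            {ω | W.sigma n ω ≤ (s : ℕ∞)}ᶜ ∩ {ω | W.X s ω = o}) ∩
            {ω | W.eta (n + 1) ω ≤ (m : ℕ∞)}) := by
      ext ω
      simp only [GrowingSRW.eventA, Set.mem_iUnion, Set.mem_inter_iff, Set.mem_setOf_eq,
        Set.mem_compl_iff]
      constructor
      · rintro ⟨⟨s, h1, h2, h3⟩, hm⟩
        have hsm : (s : ℕ∞) < (m : ℕ∞) :=
          lt_of_lt_of_le h2 ((sigma_le_eta_succ W n ω).trans hm)
        exact ⟨s, Nat.cast_lt.mp hsm, ⟨⟨h1, not_le.mpr h2⟩, h3⟩, hm⟩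
      · rintro ⟨s, hsm, ⟨⟨h1, h2⟩, h3⟩, hm⟩
        exact ⟨⟨s, h1, not_le.mp h2, h3⟩, hm⟩
    rw [h]
    refine MeasurableSet.iUnion fun s => MeasurableSet.iUnion fun hsm => ?_
    refine MeasurableSet.inter (MeasurableSet.inter (MeasurableSet.inter ?_ ?_) ?_) ?_
    · exact (W.F.mono (by omega : s ≤ m)) _ ((stopping_eta_sigma W hlf n).1 s)
    · exact ((W.F.mono (by omega : s ≤ m)) _ ((stopping_eta_sigma W hlf n).2 s)).compl
    · exact (W.F.mono (by omega : s ≤ m)) _ (W.X_adapted s o)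
    · exact (stopping_eta_sigma W hlf (n + 1)).1 m

lemma stoppedSigma_le (F : Filtration ℕ mΩ) (τ : Ω → ℕ∞) :
    stoppedSigma F τ ≤ mΩ :=
  MeasurableSpace.generateFrom_le fun _ hs => hs.1

lemma stoppedSigma_mono {F : Filtration ℕ mΩ} {τ σ' : Ω → ℕ∞}
    (hle : ∀ ω, τ ω ≤ σ' ω)
    (hσ : ∀ m : ℕ, MeasurableSet[F m] {ω | σ' ω ≤ (m : ℕ∞)}) :
    stoppedSigma F τ ≤ stoppedSigma F σ' := by
  apply MeasurableSpace.generateFrom_le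
  rintro s ⟨hs1, hs2⟩
  apply MeasurableSpace.measurableSet_generateFrom
  refine ⟨hs1, fun m => ?_⟩
  have h : s ∩ {ω | σ' ω ≤ (m : ℕ∞)}
      = (s ∩ {ω | τ ω ≤ (m : ℕ∞)}) ∩ {ω | σ' ω ≤ (m : ℕ∞)} := by
    ext ω
    simp only [Set.mem_inter_iff, Set.mem_setOf_eq]
    constructor
    · rintro ⟨h1, h2⟩
      exact ⟨⟨h1, (hle ω).trans h2⟩, h2⟩
    · rintro ⟨⟨h1, _⟩, h2⟩
      exact ⟨h1, h2⟩
  rw [h]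
  exact (hs2 m).inter (hσ m)

/-- The filtration `F_{η_{k+1}}` for Lévy's Borel–Cantelli. -/
noncomputable def levyFilt [Countable V] (W : GrowingSRW Gbar o mΩ μ)
    (hlf : Gbar.LocallyFinite) : Filtration ℕ mΩ where
  seq k := stoppedSigma W.F (W.eta (k + 1))
  mono' := by
    intro k k' hkk'
    exact stoppedSigma_mono (fun ω => eta_mono W ω (by omega : k + 1 ≤ k' + 1))
      ((stopping_eta_sigma W hlf (k' + 1)).1)
  le' k := stoppedSigma_le W.F (W.eta (k + 1))

lemma levy_bc [Countable V] (W : GrowingSRW Gbar o mΩ μ) (hlf : Gbar.LocallyFinite) :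
    ∀ᵐ ω ∂μ, ω ∈ limsup (fun n => W.eventA n) atTop ↔
      Tendsto (fun n => ∑ k ∈ Finset.range n, W.p (k + 1) ω) atTop atTop := by
  have h := MeasureTheory.ae_mem_limsup_atTop_iff (ℱ := levyFilt W hlf) μ
    (s := fun n => W.eventA n) (fun n => eventA_measurable_stopped W hlf n)
  filter_upwards [h] with ω hω
  exact hω

lemma p_nonneg (W : GrowingSRW Gbar o mΩ μ) (n : ℕ) : 0 ≤ᵐ[μ] W.p n :=
  condExp_nonneg (Filter.Eventually.of_forall fun ω =>
    Set.indicator_nonneg (fun _ _ => zero_le_one) ω)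

end Levy
section Pathwise

variable {V : Type*} {Gbar : SimpleGraph V} {o : V} {Ω : Type*} {mΩ : MeasurableSpace Ω}
  {μ : Measure Ω} [IsProbabilityMeasure μ]

lemma pathwise (W : GrowingSRW Gbar o mΩ μ) (hlf : Gbar.LocallyFinite) (ω : Ω)
    (hadj : ∀ t, (W.G t ω).Adj (W.X t ω) (W.X (t + 1) ω))
    (hinf : {t | W.X t ω = o}.Infinite)
    (hfinA : {n | ω ∈ W.eventA n}.Finite) :
    ∃ t₁, W.X t₁ ω = o ∧ ∀ s, t₁ ≤ s → ω ∈ FDset W s := by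
  have honb : ∀ t, W.X t ω = o → W.X t ω ∉ Boundary Gbar (W.G t ω) := by
    intro t h
    rw [h]
    exact o_not_bdry W ω t
  by_cases hall : ∀ n : ℕ, W.eta n ω ≠ ⊤ ∧ W.sigma n ω ≠ ⊤
  · -- all stopping times finite : derive a contradiction
    exfalso
    have hstrict : ∀ n, W.eta n ω < W.sigma n ω := by
      intro n
      refine lt_of_le_of_ne (eta_le_sigma W n ω) ?_
      intro heq
      obtain ⟨hηne, hσne⟩ := hall n
      obtain ⟨j, hj⟩ : ∃ j : ℕ, W.eta n ω = (j : ℕ∞) :=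
        ⟨(W.eta n ω).toNat, (ENat.coe_toNat hηne).symm⟩
      have hnotb : W.X j ω ∉ Boundary Gbar (W.G j ω) := by
        cases n with
        | zero =>
          have hj' : ((j : ℕ) : ℕ∞) = 0 := by rw [← hj]; rfl
          have hj0 : j = 0 := by exact_mod_cast hj'
          subst hj0
          intro hb
          exact honb 0 (W.X_zero ω) hb
        | succ n' =>
          have hj2 : W.nextEta ω (W.sigma n' ω) = (j : ℕ∞) := by
            rw [← eta_succ_eq]; exact hj
          simp only [GrowingSRW.nextEta] at hj2
          exact (sInf_image_attained hj2).1.2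
      have hj3 : W.sigmaOf ω (W.eta n ω) = (j : ℕ∞) := by
        rw [← sigma_eq, ← heq]; exact hj
      simp only [GrowingSRW.sigmaOf] at hj3
      have h2 := (sInf_image_attained hj3).1.2
      apply hnotb
      rwa [hj, ENat.toNat_coe] at h2
    have hge : ∀ n : ℕ, (n : ℕ∞) ≤ W.eta n ω := by
      intro n
      induction n with
      | zero => simp [eta_zero_eq]
      | succ n ih =>
        have hlt : (n : ℕ∞) < W.eta (n + 1) ω :=
          lt_of_le_of_lt ih (lt_of_lt_of_le (hstrict n) (sigma_le_eta_succ W n ω))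
        have : (n : ℕ∞) + 1 ≤ W.eta (n + 1) ω :=
          Order.add_one_le_of_lt hlt
        rwa [show ((n : ℕ) : ℕ∞) + 1 = ((n + 1 : ℕ) : ℕ∞) by push_cast; ring] at this
    have claim1 : ∀ t : ℕ, W.X t ω = o →
        ∃ n, ω ∈ W.eventA n ∧ (W.eta n ω).toNat ≤ t ∧ t < (W.sigma n ω).toNat := by
      intro t ht
      set Q : ℕ → Prop := fun n => (W.eta n ω).toNat ≤ t with hQdef
      have hQ0 : Q 0 := by simp [hQdef, eta_zero_eq]
      set n₀ := Nat.findGreatest Q t with hn₀def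
      have hn₀ : Q n₀ := Nat.findGreatest_spec (Nat.zero_le t) hQ0
      have htoNat_ge : ∀ n : ℕ, n ≤ (W.eta n ω).toNat := by
        intro n
        have h1 := hge n
        have h2 := (hall n).1
        rw [← ENat.coe_toNat h2] at h1
        exact_mod_cast h1
      have hn₁ : ¬ Q (n₀ + 1) := by
        by_cases h : n₀ + 1 ≤ t
        · exact Nat.findGreatest_is_greatest (Nat.lt_succ_self n₀) h
        · intro hQ1
          have := htoNat_ge (n₀ + 1)
          have hle : n₀ ≤ t := Nat.findGreatest_le t
          simp only [hQdef] at hQ1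
          omega
      have hηle : W.eta n₀ ω ≤ (t : ℕ∞) := by
        rw [← ENat.coe_toNat (hall n₀).1]
        exact Nat.cast_le.mpr hn₀
      have htσ : (t : ℕ∞) < W.sigma n₀ ω := by
        by_contra hc
        push_neg at hc
        have hηn1 : (t : ℕ∞) < W.eta (n₀ + 1) ω := by
          rw [← ENat.coe_toNat (hall (n₀ + 1)).1]
          have : t < (W.eta (n₀ + 1) ω).toNat := by
            simp only [hQdef] at hn₁
            omega
          exact_mod_cast this
        have hPt : ¬ (W.sigma n₀ ω ≤ (t : ℕ∞) ∧
            W.X t ω ∉ Boundary Gbar (W.G t ω)) := by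
          intro hP
          have hle2 : W.eta (n₀ + 1) ω ≤ (t : ℕ∞) := by
            rw [eta_succ_eq]
            exact sInf_le (Set.mem_image_of_mem _ hP)
          exact absurd hle2 (not_le.mpr hηn1)
        push_neg at hPt
        exact honb t ht (hPt hc)
      refine ⟨n₀, ⟨t, hηle, htσ, ht⟩, hn₀, ?_⟩
      have hσfin := (hall n₀).2
      rw [← ENat.coe_toNat hσfin] at htσ
      exact_mod_cast htσ
    have hsub : {t | W.X t ω = o} ⊆ ⋃ n ∈ {n | ω ∈ W.eventA n},
        Set.Ico ((W.eta n ω).toNat) ((W.sigma n ω).toNat) := by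
      intro t ht
      obtain ⟨n, hA, h1, h2⟩ := claim1 t ht
      exact Set.mem_biUnion hA ⟨h1, h2⟩
    exact hinf ((hfinA.biUnion (fun n _ => Set.finite_Ico _ _)).subset hsub)
  · push_neg at hall
    obtain ⟨n, hn⟩ : ∃ n, W.eta n ω = ⊤ ∨ W.sigma n ω = ⊤ := by
      obtain ⟨n, hn⟩ := hall
      by_cases h : W.eta n ω = ⊤
      · exact ⟨n, Or.inl h⟩
      · exact ⟨n, Or.inr (hn h)⟩
    have hex : ∃ n, W.eta n ω = ⊤ ∨ W.sigma n ω = ⊤ := ⟨n, hn⟩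
    set n₀ := Nat.find hex with hn₀def
    have hn₀spec := Nat.find_spec hex
    have hn₀min : ∀ m, m < n₀ → ¬ (W.eta m ω = ⊤ ∨ W.sigma m ω = ⊤) :=
      fun m hm => Nat.find_min hex hm
    by_cases hetatop : W.eta n₀ ω = ⊤
    · exfalso
      have hn0 : n₀ ≠ 0 := by
        intro h
        rw [h, eta_zero_eq] at hetatop
        simp at hetatop
      obtain ⟨m, hm⟩ : ∃ m, n₀ = m + 1 := ⟨n₀ - 1, by omega⟩
      have hσm : W.sigma m ω ≠ ⊤ := by
        intro hc
        exact hn₀min m (by omega) (Or.inr hc)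
      set k := (W.sigma m ω).toNat with hkdef
      have hσk : W.sigma m ω = (k : ℕ∞) := (ENat.coe_toNat hσm).symm
      have hη' : W.nextEta ω (W.sigma m ω) = ⊤ := by
        rw [← eta_succ_eq, ← hm]; exact hetatop
      simp only [GrowingSRW.nextEta] at hη'
      have htop := sInf_image_eq_top.mp hη'
      obtain ⟨t, ht, hkt⟩ := hinf.exists_gt k
      have h2 := htop t
      push_neg at h2
      have hb := h2 (by rw [hσk]; exact_mod_cast hkt.le)
      exact honb t ht hb
    · have hsigtop : W.sigma n₀ ω = ⊤ := by
        rcases hn₀spec with h | h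
        · exact absurd h hetatop
        · exact h
      set T := (W.eta n₀ ω).toNat with hTdef
      have hηT : W.eta n₀ ω = (T : ℕ∞) := (ENat.coe_toNat hetatop).symm
      have hσ' : W.sigmaOf ω (W.eta n₀ ω) = ⊤ := by rw [← sigma_eq]; exact hsigtop
      simp only [GrowingSRW.sigmaOf] at hσ'
      have htop := sInf_image_eq_top.mp hσ'
      have hnb : ∀ s, T ≤ s → W.X s ω ∉ Boundary Gbar (W.G T ω) := by
        intro s hs hbad
        apply htop s
        constructor
        · rw [hηT]; exact_mod_cast hs
        · rwa [hηT, ENat.toNat_coe]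
      have hnbd : ∀ s, T ≤ s → W.X s ω ∈ (W.G T ω).verts →
          (W.G T ω).neighborSet (W.X s ω) = Gbar.neighborSet (W.X s ω) := by
        intro s hs hv
        refine Set.eq_of_subset_of_ncard_le (fun y hy => (W.G T ω).adj_sub hy) ?_
          ((Gbar.neighborSet _).toFinite)
        by_contra hc
        push_neg at hc
        exact hnb s hs ⟨hv, hc⟩
      have hverts : ∀ s, T ≤ s → W.X s ω ∈ (W.G T ω).verts := by
        intro s hs
        induction s, hs using Nat.le_induction with
        | base => exact W.X_mem ω T
        | succ s hs ih =>
          have hGadj : Gbar.Adj (W.X s ω) (W.X (s + 1) ω) := (W.G s ω).adj_sub (hadj s)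
          have hmem : W.X (s + 1) ω ∈ (W.G T ω).neighborSet (W.X s ω) := by
            rw [hnbd s hs ih]
            exact hGadj
          exact (W.G T ω).edge_vert ((W.G T ω).adj_symm hmem)
      have hFDall : ∀ s, T ≤ s → ω ∈ FDset W s := by
        intro s hs y hy
        have hTs : (W.G T ω).Adj (W.X s ω) y := by
          have : y ∈ (W.G T ω).neighborSet (W.X s ω) := by
            rw [hnbd s hs (hverts s hs)]
            exact hy
          exact this
        exact (G_le_of_le W ω hs).2 hTs
      obtain ⟨t₁, ht₁, hTt₁⟩ := hinf.exists_gt T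
      exact ⟨t₁, ht₁, fun s hs => hFDall s (by omega)⟩

end Pathwise
/-- With `S = Σ_n p_n`, `p_n = P(A_n | F_{η_n})`,
`A_n = {∃ s ∈ [η_n, σ_n) : X_s = 0}`, if simple random walk on the fixed graph `Ḡ` is
transient then, almost surely on the event `{S < ∞}`, the sample path of the simple
random walk on growing graphs is transient at `0`. -/
theorem srw_growing_transient_of_sum_condProb_lt_top
    {V : Type*} (Gbar : SimpleGraph V) (o : V)
    (hlf : Gbar.LocallyFinite) (hconn : Gbar.Connected) (hinf : Infinite V)
    (htrans : SRWTransient Gbar o)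
    {Ω : Type*} (mΩ : MeasurableSpace Ω) (μ : Measure Ω) [IsProbabilityMeasure μ]
    (W : GrowingSRW Gbar o mΩ μ) :
    ∀ᵐ ω ∂μ, (∑' n : ℕ, ENNReal.ofReal (W.p n ω)) ≠ ⊤ →
      {t | W.X t ω = o}.Finite := by
  haveI : Countable V := countable_of_connected_s3 hlf hconn
  have hlevy := levy_bc W hlf
  have hnn : ∀ᵐ ω ∂μ, ∀ n, 0 ≤ W.p n ω := ae_all_iff.mpr fun n => p_nonneg W n
  have hadj := ae_adjG W
  have hbad : ∀ᵐ ω ∂μ, ∀ t₁ : ℕ, ¬ (W.X t₁ ω = o ∧ (∀ s, t₁ ≤ s → ω ∈ FDset W s) ∧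
      {t | W.X t ω = o}.Infinite ∧
      ∀ t, (W.G t ω).Adj (W.X t ω) (W.X (t + 1) ω)) := by
    rw [ae_all_iff]
    intro t₁
    have h0 := bad_null W hlf htrans t₁
    rw [ae_iff]
    convert h0 using 2
    ext ω
    simp only [Set.mem_setOf_eq, not_not]
  filter_upwards [hlevy, hnn, hadj, hbad] with ω hω1 hω2 hω3 hω4
  intro hS
  rw [← Set.not_infinite]
  intro hinf'
  have hnotT : ¬ Tendsto (fun n => ∑ k ∈ Finset.range n, W.p (k + 1) ω) atTop atTop := by
    intro hT
    set B := (∑' n, ENNReal.ofReal (W.p n ω)).toReal with hBdef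
    have hb : ∀ n, ∑ k ∈ Finset.range n, W.p (k + 1) ω ≤ B := by
      intro n
      have h1 : ∑ k ∈ Finset.range n, W.p (k + 1) ω
          = (∑ k ∈ Finset.range n, ENNReal.ofReal (W.p (k + 1) ω)).toReal := by
        rw [ENNReal.toReal_sum (fun k _ => ENNReal.ofReal_ne_top)]
        exact Finset.sum_congr rfl fun k _ => (ENNReal.toReal_ofReal (hω2 (k + 1))).symm
      rw [h1, hBdef]
      apply ENNReal.toReal_mono hS
      calc ∑ k ∈ Finset.range n, ENNReal.ofReal (W.p (k + 1) ω)
          ≤ ∑' k, ENNReal.ofReal (W.p (k + 1) ω) := ENNReal.sum_le_tsum _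
        _ ≤ ∑' j, ENNReal.ofReal (W.p j ω) :=
            ENNReal.tsum_comp_le_tsum_of_injective (add_left_injective 1) _
    obtain ⟨n, hn⟩ := (hT.eventually_gt_atTop B).exists
    exact absurd (hb n) (not_le.mpr hn)
  have hnotmem : ω ∉ limsup (fun n => W.eventA n) atTop := fun hmem => hnotT (hω1.mp hmem)
  rw [mem_limsup_iff_frequently_mem, Filter.not_frequently] at hnotmem
  obtain ⟨N, hN⟩ := Filter.eventually_atTop.mp hnotmem
  have hfinA : {n | ω ∈ W.eventA n}.Finite := by
    apply Set.Finite.subset (Set.finite_Iio N)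
    intro n hn
    by_contra hc
    exact (hN n (by simpa [Set.mem_Iio, not_lt] using hc)) hn
  obtain ⟨t₁, h1, h2⟩ := pathwise W hlf ω hω3 hinf' hfinA
  exact hω4 t₁ ⟨h1, h2, hinf', hω3⟩

end MonotoneWalk
end
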